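/- arXiv:2601.13135 — 3 statements merged into one kernel-verified Lean document; each statement's English description precedes it below -/
import Mathlib

section
/- Let (X,d) be a metric space and let δ be its canonical arc-pseudo-metric. Then: (i) δ(x,x) = 0 for all x; (ii) δ(x,y) ≥ d(x,y) for all x,y (so δ(x,y) = 0 implies x = y); (iii) δ(x,y) = δ(y,x) for all x,y; (iv) δ(x,z) ≤ δ(x,y) + δ(y,z) for all x,y,z (with the convention α + ∞ = ∞); and (v) if (X,d) is complete then (X,δ) is complete, i.e. every sequence (xₙ) in X such that for every ε > 0 there is N with δ(xₘ,xₙ) < ε for all m,n ≥ N, has a point x with δ(xₙ,x) → 0. -/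
open Set TopologicalSpace MeasureTheory
open scoped ENNReal

/-- An arc in a topological space with endpoints `a` and `b`: the range of a continuous
injective map from the unit interval sending `0` to `a` and `1` to `b`. -/
def IsArcWith {X : Type*} [TopologicalSpace X] (J : Set X) (a b : X) : Prop :=
  ∃ f : unitInterval → X, Continuous f ∧ Function.Injective f ∧
    Set.range f = J ∧ f 0 = a ∧ f 1 = b

/-- An arc: a set which is the range of a continuous injective map from the unit interval. -/
def IsArc {X : Type*} [TopologicalSpace X] (J : Set X) : Prop :=
  ∃ a b, IsArcWith J a b

/-- A set `S` is arc-connected if any two distinct points of `S` are the endpoints of an arc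
contained in `S`. -/
def ArcConnected {X : Type*} [TopologicalSpace X] (S : Set X) : Prop :=
  ∀ x ∈ S, ∀ y ∈ S, x ≠ y → ∃ J, J ⊆ S ∧ IsArcWith J x y

/-- The canonical arc-pseudo-metric of a metric space:
`δ(x,y) = inf { diam H : H arc-connected, {x,y} ⊆ H ⊆ X }`, with `inf ∅ = ∞`. -/
noncomputable def arcDelta {X : Type*} [MetricSpace X] (x y : X) : ℝ≥0∞ :=
  sInf (EMetric.diam '' {H : Set X | ArcConnected H ∧ x ∈ H ∧ y ∈ H})

open Filter

section Aux
variable {X : Type*} [TopologicalSpace X]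

/-- real-parameterized arc -/
def RealArc (F : ℝ → X) (a b : X) : Prop :=
  Continuous F ∧ Set.InjOn F (Icc 0 1) ∧ F 0 = a ∧ F 1 = b

lemma isArcWith_symm {J : Set X} {a b : X} (h : IsArcWith J a b) : IsArcWith J b a := by
  obtain ⟨f, hc, hi, hr, h0, h1⟩ := h
  refine ⟨f ∘ unitInterval.symm, hc.comp unitInterval.continuous_symm,
    hi.comp unitInterval.symm_bijective.injective, ?_, ?_, ?_⟩
  · rw [Set.range_comp, unitInterval.symm_bijective.surjective.range_eq, Set.image_univ, hr]
  · simp [unitInterval.symm_zero, h1]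
  · simp [unitInterval.symm_one, h0]

lemma isArcWith_toReal {J : Set X} {a b : X} (h : IsArcWith J a b) :
    ∃ F : ℝ → X, RealArc F a b ∧ F '' (Icc 0 1) = J := by
  obtain ⟨f, hc, hi, hr, h0, h1⟩ := h
  refine ⟨fun t => f (projIcc 0 1 zero_le_one t), ⟨hc.comp continuous_projIcc, ?_, ?_, ?_⟩, ?_⟩
  · intro s hs t ht hst
    have := congrArg Subtype.val (hi hst)
    simp only [coe_projIcc] at this
    rwa [min_eq_right hs.2, max_eq_right hs.1, min_eq_right ht.2, max_eq_right ht.1] at this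
  · show f (projIcc 0 1 zero_le_one 0) = a
    rw [projIcc_of_mem _ (Set.left_mem_Icc.2 zero_le_one)]; exact h0
  · show f (projIcc 0 1 zero_le_one 1) = b
    rw [projIcc_of_mem _ (Set.right_mem_Icc.2 zero_le_one)]; exact h1
  · rw [← hr]
    ext y; constructor
    · rintro ⟨t, ht, rfl⟩; exact ⟨projIcc 0 1 zero_le_one t, rfl⟩
    · rintro ⟨t, rfl⟩
      refine ⟨(t : ℝ), t.2, ?_⟩
      show f (projIcc 0 1 zero_le_one t) = f t
      rw [projIcc_of_mem _ t.2]

lemma realArc_toIsArcWith {F : ℝ → X} {a b : X} (h : RealArc F a b) :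
    IsArcWith (F '' Icc 0 1) a b := by
  obtain ⟨hc, hi, h0, h1⟩ := h
  refine ⟨fun t => F (t : ℝ), hc.comp continuous_subtype_val, ?_, ?_, h0, h1⟩
  · intro s t hst
    exact Subtype.ext (hi s.2 t.2 hst)
  · ext y; constructor
    · rintro ⟨t, rfl⟩; exact ⟨t, t.2, rfl⟩
    · rintro ⟨t, ht, rfl⟩; exact ⟨⟨t, ht⟩, rfl⟩

end Aux

section Glue
variable {X : Type*} [MetricSpace X]

/-- Glue two real arcs `F : p → y`, `G : y → q` by cutting `F` at its first hit of the image
of `G`.  Produces an injective arc from `p` to `q` inside the union of the images. -/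
lemma glue_arcs {F G : ℝ → X} {p y q : X}
    (hFc : Continuous F) (hFi : InjOn F (Icc 0 1)) (hF0 : F 0 = p) (hF1 : F 1 = y)
    (hGc : Continuous G) (hGi : InjOn G (Icc 0 1)) (hG0 : G 0 = y) (hG1 : G 1 = q)
    (hpq : p ≠ q) :
    ∃ H : ℝ → X, Continuous H ∧ InjOn H (Icc 0 1) ∧ H 0 = p ∧ H 1 = q ∧
      H '' Icc 0 1 ⊆ F '' Icc 0 1 ∪ G '' Icc 0 1 := by
  classical
  set T : Set ℝ := {t | t ∈ Icc (0:ℝ) 1 ∧ F t ∈ G '' Icc 0 1} with hT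
  have hTne : (1:ℝ) ∈ T := ⟨right_mem_Icc.2 zero_le_one, ⟨0, left_mem_Icc.2 zero_le_one, by rw [hG0, hF1]⟩⟩
  have hGcomp : IsCompact (G '' Icc 0 1) := (isCompact_Icc).image hGc
  have hTclosed : IsClosed T := by
    have : T = Icc 0 1 ∩ F ⁻¹' (G '' Icc 0 1) := rfl
    rw [this]
    exact isClosed_Icc.inter (hGcomp.isClosed.preimage hFc)
  have hTbdd : BddBelow T := ⟨0, fun t ht => ht.1.1⟩
  set τ := sInf T with hτdef
  have hτT : τ ∈ T := hTclosed.csInf_mem ⟨1, hTne⟩ hTbdd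
  have hτmem : τ ∈ Icc (0:ℝ) 1 := hτT.1
  have hτmin : ∀ t ∈ Icc (0:ℝ) 1, t < τ → F t ∉ G '' Icc 0 1 := by
    intro t ht htτ hmem
    exact absurd (csInf_le hTbdd ⟨ht, hmem⟩) (not_le.2 htτ)
  obtain ⟨σ, hσmem, hσ⟩ := hτT.2
  -- hσ : G σ = F τ
  by_cases hσ1 : σ = 1
  · -- F τ = G 1 = q ; use the initial piece of F
    have hFτ : F τ = q := by rw [← hσ, hσ1, hG1]
    have hτpos : 0 < τ := by
      rcases lt_or_eq_of_le hτmem.1 with h | h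
      · exact h
      · exfalso; apply hpq; rw [← hF0, ← hFτ, ← h]
    refine ⟨fun t => F (τ * t), hFc.comp (continuous_const.mul continuous_id), ?_, ?_, ?_, ?_⟩
    · intro s hs t ht hst
      have h1 : τ * s ∈ Icc (0:ℝ) 1 :=
        ⟨mul_nonneg hτmem.1 hs.1, le_trans (mul_le_of_le_one_right hτmem.1 hs.2) hτmem.2⟩
      have h2 : τ * t ∈ Icc (0:ℝ) 1 :=
        ⟨mul_nonneg hτmem.1 ht.1, le_trans (mul_le_of_le_one_right hτmem.1 ht.2) hτmem.2⟩
      have := hFi h1 h2 hst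
      exact mul_left_cancel₀ (ne_of_gt hτpos) this
    · simp [hF0]
    · simp [hFτ]
    · rintro z ⟨t, ht, rfl⟩
      left
      exact ⟨τ * t, ⟨mul_nonneg hτmem.1 ht.1, le_trans (mul_le_of_le_one_right hτmem.1 ht.2) hτmem.2⟩, rfl⟩
  · have hσlt : σ < 1 := lt_of_le_of_ne hσmem.2 hσ1
    by_cases hτ0 : τ = 0
    · -- p = F 0 = G σ ; use the tail piece of G
      have hpσ : G σ = p := by rw [hσ, hτ0, hF0]
      refine ⟨fun t => G (σ + t * (1 - σ)), hGc.comp (by continuity), ?_, ?_, ?_, ?_⟩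
      · intro s hs t ht hst
        have harg : ∀ {u : ℝ}, u ∈ Icc (0:ℝ) 1 → σ + u * (1 - σ) ∈ Icc (0:ℝ) 1 := by
          intro u hu
          constructor
          · have : (0:ℝ) ≤ u * (1 - σ) := mul_nonneg hu.1 (by linarith)
            linarith [hσmem.1]
          · nlinarith [hu.2, hσmem.1]
        have := hGi (harg hs) (harg ht) hst
        have h1σ : (0:ℝ) < 1 - σ := by linarith
        exact mul_right_cancel₀ (ne_of_gt h1σ) (by linarith : s * (1 - σ) = t * (1 - σ))
      · simp [hpσ]
      · simp [hG1]
      · rintro z ⟨t, ht, rfl⟩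
        right
        refine ⟨σ + t * (1 - σ), ?_, rfl⟩
        constructor
        · have : (0:ℝ) ≤ t * (1 - σ) := mul_nonneg ht.1 (by linarith)
          linarith [hσmem.1]
        · nlinarith [ht.2, hσmem.1]
    · have hτpos : 0 < τ := lt_of_le_of_ne hτmem.1 (Ne.symm hτ0)
      -- main case : concatenate
      refine ⟨fun t => if t ≤ 1/2 then F (2 * t * τ) else G (σ + (2*t - 1) * (1 - σ)), ?_, ?_, ?_, ?_, ?_⟩
      · apply Continuous.if_le (by fun_prop) (by fun_prop) continuous_id continuous_const
        intro t ht
        simp only [id] at ht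
        subst ht
        norm_num
        rw [hσ]
      · have hargF : ∀ {u : ℝ}, u ∈ Icc (0:ℝ) 1 → u ≤ 1/2 → 2 * u * τ ∈ Icc (0:ℝ) 1 := by
          intro u hu hu2
          constructor
          · nlinarith [hτmem.1, hu.1]
          · calc 2 * u * τ ≤ 2 * (1/2) * τ := by nlinarith [hτmem.1]
              _ ≤ 1 := by linarith [hτmem.2]
        have hargG : ∀ {u : ℝ}, u ∈ Icc (0:ℝ) 1 → ¬(u ≤ 1/2) → σ + (2*u - 1) * (1 - σ) ∈ Icc (0:ℝ) 1 := by
          intro u hu hu2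
          push_neg at hu2
          constructor
          · have : (0:ℝ) ≤ (2*u - 1) * (1 - σ) := mul_nonneg (by linarith) (by linarith)
            linarith [hσmem.1]
          · nlinarith [hu.2, hσmem.1]
        have hGgt : ∀ {u : ℝ}, u ∈ Icc (0:ℝ) 1 → ¬(u ≤ 1/2) → σ < σ + (2*u - 1) * (1 - σ) := by
          intro u hu hu2
          push_neg at hu2
          have : (0:ℝ) < (2*u - 1) * (1 - σ) := mul_pos (by linarith) (by linarith)
          linarith
        intro s hs t ht hst
        by_cases hs2 : s ≤ 1/2 <;> by_cases ht2 : t ≤ 1/2 <;>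
          simp only [hs2, ht2, if_pos, if_neg, if_true, if_false] at hst
        · have := hFi (hargF hs hs2) (hargF ht ht2) hst
          have hτ' : τ ≠ 0 := ne_of_gt hτpos
          have h := mul_right_cancel₀ hτ' this
          linarith
        · -- s on F part, t on G part : impossible unless s = t
          exfalso
          rcases lt_or_eq_of_le (mul_le_of_le_one_left hτmem.1 (by linarith : 2 * s ≤ 1) : 2 * s * τ ≤ τ) with h | h
          · exact hτmin _ (hargF hs hs2) h ⟨_, hargG ht ht2, hst.symm⟩
          · -- 2 s τ = τ, so F τ = G σ = G (arg t) with arg t > σ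
            rw [h, ← hσ] at hst
            have := hGi hσmem (hargG ht ht2) hst
            exact absurd this (ne_of_lt (hGgt ht ht2))
        · exfalso
          rcases lt_or_eq_of_le (mul_le_of_le_one_left hτmem.1 (by linarith : 2 * t ≤ 1) : 2 * t * τ ≤ τ) with h | h
          · exact hτmin _ (hargF ht ht2) h ⟨_, hargG hs hs2, hst⟩
          · rw [h, ← hσ] at hst
            have := hGi (hargG hs hs2) hσmem hst
            exact absurd this.symm (ne_of_lt (hGgt hs hs2))
        · have := hGi (hargG hs hs2) (hargG ht ht2) hst
          have h1σ : (0:ℝ) < 1 - σ := by linarith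
          have : (2*s - 1) * (1 - σ) = (2*t - 1) * (1 - σ) := by linarith
          have := mul_right_cancel₀ (ne_of_gt h1σ) this
          linarith
      · norm_num [hF0]
      · norm_num [hG1]
      · rintro z ⟨t, ht, rfl⟩
        by_cases ht2 : t ≤ 1/2 <;> simp only [ht2, if_true, if_false, if_pos, if_neg]
        · left
          refine ⟨2 * t * τ, ?_, rfl⟩
          constructor
          · have := ht.1
            nlinarith [hτmem.1]
          · calc 2 * t * τ ≤ 2 * (1/2) * τ := by nlinarith [hτmem.1]
              _ ≤ 1 := by linarith [hτmem.2]
        · right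
          push_neg at ht2
          refine ⟨σ + (2*t - 1) * (1 - σ), ?_, rfl⟩
          constructor
          · have : (0:ℝ) ≤ (2*t - 1) * (1 - σ) := mul_nonneg (by linarith) (by linarith)
            linarith [hσmem.1]
          · nlinarith [ht.2, hσmem.1]

end Glue

/-- stronger real conversion : constant outside [0,1], range equals J -/
lemma isArcWith_toReal' {X : Type*} [TopologicalSpace X] {J : Set X} {a b : X}
    (h : IsArcWith J a b) :
    ∃ F : ℝ → X, Continuous F ∧ Set.InjOn F (Icc 0 1) ∧ F 0 = a ∧ F 1 = b ∧
      Set.range F = J ∧ (∀ t ≤ (0:ℝ), F t = a) ∧ (∀ t, (1:ℝ) ≤ t → F t = b) := by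
  obtain ⟨f, hc, hi, hr, h0, h1⟩ := h
  have key : ∀ {u : ℝ} (hu : u ∈ Icc (0:ℝ) 1), f (projIcc 0 1 zero_le_one u) = f ⟨u, hu⟩ := by
    intro u hu; rw [projIcc_of_mem _ hu]
  refine ⟨fun t => f (projIcc 0 1 zero_le_one t), hc.comp continuous_projIcc, ?_, ?_, ?_, ?_, ?_, ?_⟩
  · intro s hs t ht hst
    simp only [key hs, key ht] at hst
    have := congrArg Subtype.val (hi hst)
    simpa using this
  · show f (projIcc 0 1 zero_le_one 0) = a
    rw [key (left_mem_Icc.2 zero_le_one)]; exact h0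
  · show f (projIcc 0 1 zero_le_one 1) = b
    rw [key (right_mem_Icc.2 zero_le_one)]; exact h1
  · rw [← hr]
    ext z; constructor
    · rintro ⟨t, rfl⟩; exact ⟨projIcc 0 1 zero_le_one t, rfl⟩
    · rintro ⟨t, rfl⟩
      refine ⟨(t : ℝ), ?_⟩
      show f (projIcc 0 1 zero_le_one t) = f t
      rw [key t.2]
  · intro t ht
    show f (projIcc 0 1 zero_le_one t) = a
    rw [projIcc_of_le_left _ ht]; exact h0
  · intro t ht
    show f (projIcc 0 1 zero_le_one t) = b
    rw [projIcc_of_right_le _ ht]; exact h1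

section Chain
variable {X : Type*} [MetricSpace X]
variable (H : ℕ → Set X) (v : ℕ → X) (p : X) (x : X) (R : ℕ → ℝ≥0∞)

/-- the guaranteed-constant tail start -/
noncomputable def ek (k : ℕ) : ℝ := 1 - (2⁻¹:ℝ)^(k+1)

lemma ek_mem (k : ℕ) : ek k ∈ Icc (0:ℝ) 1 := by
  unfold ek
  constructor
  · have h1 : (2⁻¹:ℝ)^(k+1) ≤ 1 := by
      apply pow_le_one₀ <;> norm_num
    linarith
  · have : (0:ℝ) < (2⁻¹:ℝ)^(k+1) := by positivity
    linarith

lemma ek_lt_succ (k : ℕ) : ek k < ek (k+1) := by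
  unfold ek
  have : (2⁻¹:ℝ)^(k+1+1) < (2⁻¹:ℝ)^(k+1) :=
    pow_lt_pow_right_of_lt_one₀ (by norm_num) (by norm_num) (by omega)
  linarith

lemma ek_mono : Monotone (ek) := by
  apply monotone_nat_of_le_succ
  intro k; exact (ek_lt_succ k).le

/-- invariant of the k-th approximating curve -/
def ChainInv (k : ℕ) (F : ℝ → X) : Prop :=
  Continuous F ∧
  (∀ s t t' : ℝ, 0 ≤ s → s < t → t ≤ t' → t' ≤ 1 → F s = F t → F t' = F t) ∧
  F 0 = p ∧
  (∀ t ≤ (0:ℝ), F t = F 0) ∧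
  (∀ t, F t ∈ ⋃ i, H i) ∧
  (∀ t ≥ ek k, F t = F 1) ∧
  F 1 = v (k+1)

/-- relation between consecutive curves -/
def ChainRel (k : ℕ) (F F' : ℝ → X) (τ : ℝ) : Prop :=
  0 ≤ τ ∧ τ ≤ 1 ∧ (∀ t ≤ τ, F' t = F t) ∧
  (∀ t, τ ≤ t → F' t ∈ EMetric.closedBall x (R (k+1)))

variable {H v p x R}

lemma chain_base (hAC : ∀ k, ArcConnected (H k)) (hv : ∀ k, v k ∈ H k ∧ v (k+1) ∈ H k)
    (hp : p ∈ H 0) : ∃ F, ChainInv H v p 0 F := by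
  by_cases hpv : p = v 1
  · refine ⟨fun _ => p, continuous_const, ?_, rfl, ?_, ?_, ?_, hpv⟩
    · intro s t t' _ _ _ _ _; rfl
    · intro t _; rfl
    · intro t; exact mem_iUnion.2 ⟨0, hp⟩
    · intro t _; rfl
  · obtain ⟨J, hJ, harc⟩ := hAC 0 p hp (v 1) (hv 0).2 hpv
    obtain ⟨G, hGc, hGi, hG0, hG1, hGr, hGl, hGrt⟩ := isArcWith_toReal' harc
    refine ⟨fun t => G (2 * t), hGc.comp (by fun_prop), ?_, ?_, ?_, ?_, ?_, ?_⟩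
    · intro s t t' hs hst htt' ht1 hFst
      by_cases ht : t ≤ 1/2
      · exfalso
        have h2s : 2 * s ∈ Icc (0:ℝ) 1 := ⟨by linarith, by linarith⟩
        have h2t : 2 * t ∈ Icc (0:ℝ) 1 := ⟨by linarith, by linarith⟩
        have := hGi h2s h2t hFst
        linarith
      · push_neg at ht
        have h1 : G (2 * t) = v 1 := hGrt _ (by linarith)
        have h2 : G (2 * t') = v 1 := hGrt _ (by linarith)
        show G (2 * t') = G (2 * t)
        rw [h1, h2]
    · show G (2 * 0) = p
      rw [mul_zero, hG0]
    · intro t ht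
      show G (2 * t) = G (2 * 0)
      rw [mul_zero, hG0, hGl _ (by linarith)]
    · intro t
      refine mem_iUnion.2 ⟨0, hJ ?_⟩
      rw [← hGr]; exact ⟨2 * t, rfl⟩
    · intro t ht
      have h1 : G (2 * t) = v 1 := hGrt _ (by unfold ek at ht; norm_num at ht ⊢; linarith)
      have h2 : G (2 * 1) = v 1 := hGrt _ (by norm_num)
      show G (2 * t) = G (2 * 1)
      rw [h1, h2]
    · show G (2 * 1) = v 1
      exact hGrt _ (by norm_num)

lemma chain_step (hAC : ∀ k, ArcConnected (H k)) (hv : ∀ k, v k ∈ H k ∧ v (k+1) ∈ H k)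
    (hball : ∀ k, H k ⊆ EMetric.closedBall x (R k))
    (k : ℕ) (F : ℝ → X) (hF : ChainInv H v p k F) :
    ∃ F' τ, ChainInv H v p (k+1) F' ∧ ChainRel x R k F F' τ := by
  classical
  obtain ⟨hFc, hFinj, hF0, hFhead, hFr, hFtail, hF1⟩ := hF
  by_cases hvv : v (k+1) = v (k+2)
  · refine ⟨F, 1, ⟨hFc, hFinj, hF0, hFhead, hFr, ?_, by rw [hF1, hvv]⟩, ?_, ?_, ?_, ?_⟩
    · intro t ht; exact hFtail t (le_trans (ek_mono (Nat.le_succ k)) ht)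
    · norm_num
    · norm_num
    · intro t _; rfl
    · intro t ht
      have h1 : F t = F 1 := hFtail t (le_trans (ek_mem k).2 ht)
      rw [h1, hF1]
      exact hball (k+1) (hv (k+1)).1
  · -- main case : cut F at its first hit of an arc from v (k+1) to v (k+2) inside H (k+1)
    obtain ⟨J, hJ, harc⟩ := hAC (k+1) (v (k+1)) (hv (k+1)).1 (v (k+2)) (hv (k+1)).2 hvv
    obtain ⟨G, hGc, hGi, hG0, hG1, hGr, hGl, hGrt⟩ := isArcWith_toReal' harc
    have hGJ : ∀ u : ℝ, G u ∈ J := fun u => by rw [← hGr]; exact ⟨u, rfl⟩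
    set T : Set ℝ := Icc (0:ℝ) 1 ∩ F ⁻¹' (G '' Icc 0 1) with hT
    have hekT : ek k ∈ T :=
      ⟨ek_mem k, ⟨0, left_mem_Icc.2 zero_le_one, by rw [hG0, hFtail _ (le_refl _), hF1]⟩⟩
    have hGcomp : IsCompact (G '' Icc 0 1) := isCompact_Icc.image hGc
    have hTclosed : IsClosed T := isClosed_Icc.inter (hGcomp.isClosed.preimage hFc)
    have hTbdd : BddBelow T := ⟨0, fun t ht => ht.1.1⟩
    set τ := sInf T with hτdef
    have hτT : τ ∈ T := hTclosed.csInf_mem ⟨_, hekT⟩ hTbdd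
    have hτmem : τ ∈ Icc (0:ℝ) 1 := hτT.1
    have hτmin : ∀ t ∈ Icc (0:ℝ) 1, t < τ → F t ∉ G '' Icc 0 1 := fun t ht htτ hmem =>
      absurd (csInf_le hTbdd ⟨ht, hmem⟩) (not_le.2 htτ)
    have hτek : τ ≤ ek k := csInf_le hTbdd hekT
    obtain ⟨σ, hσmem, hσ⟩ := hτT.2
    -- hσ : G σ = F τ
    set e' := ek (k+1) with he'def
    have hτe' : τ < e' := lt_of_le_of_lt hτek (ek_lt_succ k)
    have he'1 : e' ≤ 1 := (ek_mem (k+1)).2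
    have hτ1 : τ < 1 := lt_of_lt_of_le hτe' he'1
    set c : ℝ := (1 - σ) / (e' - τ) with hcdef
    have hc0 : 0 ≤ c := div_nonneg (by linarith [hσmem.2]) (by linarith)
    set ψ : ℝ → X := fun t => G (σ + (min t e' - τ) * c) with hψdef
    set F' : ℝ → X := fun t => if t ≤ τ then F t else ψ t with hF'def
    have hψarg : ∀ t : ℝ, τ ≤ t → σ + (min t e' - τ) * c ∈ Icc σ 1 := by
      intro t ht
      have hmin1 : τ ≤ min t e' := le_min ht hτe'.le
      have hmin2 : min t e' ≤ e' := min_le_right _ _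
      constructor
      · nlinarith
      · have h1 : (min t e' - τ) * c ≤ (e' - τ) * c := by nlinarith
        have h2 : (e' - τ) * c = 1 - σ := by
          rw [hcdef, mul_comm]
          exact div_mul_cancel₀ _ (by linarith : e' - τ ≠ 0)
        nlinarith
    have hψIcc : ∀ t : ℝ, τ ≤ t → σ + (min t e' - τ) * c ∈ Icc (0:ℝ) 1 :=
      fun t ht => ⟨le_trans hσmem.1 (hψarg t ht).1, (hψarg t ht).2⟩
    have hψτ : ψ τ = F τ := by
      rw [hψdef]
      simp only [min_eq_left hτe'.le, sub_self, zero_mul, add_zero]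
      exact hσ
    have hψe' : ∀ t : ℝ, e' ≤ t → ψ t = G 1 := by
      intro t ht
      rw [hψdef]
      simp only [min_eq_right ht]
      congr 1
      rw [hcdef, mul_comm, div_mul_cancel₀ _ (by linarith : e' - τ ≠ 0)]
      ring
    have hψgt : σ < 1 → ∀ t : ℝ, τ < t → σ < σ + (min t e' - τ) * c := by
      intro hσlt t ht
      have hcpos : 0 < c := div_pos (by linarith) (by linarith)
      have : τ < min t e' := lt_min ht hτe'
      nlinarith
    have hF'c : Continuous F' := by
      rw [hF'def]
      apply Continuous.if_le hFc _ continuous_id continuous_const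
      · intro t ht
        simp only [id] at ht
        subst ht
        exact hψτ.symm
      · rw [hψdef]
        fun_prop
    refine ⟨F', τ, ⟨hF'c, ?_, ?_, ?_, ?_, ?_, ?_⟩, hτmem.1, hτmem.2, ?_, ?_⟩
    · -- injective-until-constant
      intro s t t' hs hst htt' ht'1 hFst
      by_cases ht : t ≤ τ
      · exfalso
        have hs1 : s ≤ 1 := by linarith [hτmem.2]
        have hFst' : F s = F t := by
          have h1 : F' s = F s := if_pos (by linarith)
          have h2 : F' t = F t := if_pos ht
          rw [h1, h2] at hFst; exact hFst
        have hconst : F 1 = F t := hFinj s t 1 hs hst (by linarith [hτmem.2]) (le_refl 1) hFst'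
        have hsT : s ∈ T := by
          refine ⟨⟨hs, hs1⟩, ⟨0, left_mem_Icc.2 zero_le_one, ?_⟩⟩
          rw [hG0, hFst', ← hconst, hF1]
        exact absurd (csInf_le hTbdd hsT) (not_le.2 (by linarith))
      · push_neg at ht
        have hF't : F' t = ψ t := if_neg (not_le.2 ht)
        have hF't' : F' t' = ψ t' := if_neg (not_le.2 (by linarith))
        by_cases hσlt : σ < 1
        · by_cases hs' : s ≤ τ
          · exfalso
            have hF's : F' s = F s := if_pos hs'
            rw [hF's, hF't] at hFst
            rcases lt_or_eq_of_le hs' with hslt | hseq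
            · exact hτmin s ⟨hs, by linarith [hτmem.2]⟩ hslt
                ⟨_, hψIcc t ht.le, hFst.symm⟩
            · rw [hseq, ← hσ] at hFst
              have := hGi hσmem (hψIcc t ht.le) hFst
              exact absurd this (ne_of_lt (hψgt hσlt t ht))
          · push_neg at hs'
            have hF's : F' s = ψ s := if_neg (not_le.2 hs')
            rw [hF's, hF't] at hFst
            have hinj := hGi (hψIcc s hs'.le) (hψIcc t ht.le) hFst
            have hcpos : 0 < c := div_pos (by linarith) (by linarith)
            have hmins : min s e' = min t e' := by
              have := mul_right_cancel₀ (ne_of_gt hcpos)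
                (by linarith [hinj] : (min s e' - τ) * c = (min t e' - τ) * c)
              linarith
            have hse' : e' ≤ s := by
              by_contra hcon
              push_neg at hcon
              have h1 : min s e' = s := min_eq_left hcon.le
              have h2 : s < min t e' := lt_min (by linarith) hcon
              rw [h1] at hmins
              linarith
            rw [hF't', hF't, hψe' t (by linarith), hψe' t' (by linarith)]
        · push_neg at hσlt
          have hσ1 : σ = 1 := le_antisymm hσmem.2 hσlt
          have hc0' : c = 0 := by rw [hcdef, hσ1]; simp
          have hψc : ∀ u : ℝ, ψ u = G 1 := by
            intro u
            rw [hψdef]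
            simp only [hc0', mul_zero, add_zero, hσ1]
          rw [hF't, hF't', hψc t, hψc t']
    · -- F' 0 = p
      have : F' 0 = F 0 := if_pos hτmem.1
      rw [this, hF0]
    · -- head constancy
      intro t ht
      have h1 : F' t = F t := if_pos (le_trans ht hτmem.1)
      have h2 : F' 0 = F 0 := if_pos hτmem.1
      rw [h1, h2]
      exact hFhead t ht
    · -- range in union
      intro t
      rw [hF'def]
      by_cases ht : t ≤ τ
      · simpa [ht] using hFr t
      · simp only [ht, if_false]
        exact mem_iUnion.2 ⟨k+1, hJ (hGJ _)⟩
    · -- constant tail at level k+1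
      intro t ht
      have h1 : F' t = ψ t := if_neg (not_le.2 (by
        change e' ≤ t at ht
        linarith))
      have h2 : F' 1 = ψ 1 := if_neg (not_le.2 hτ1)
      rw [h1, h2, hψe' t ht, hψe' 1 he'1]
    · -- endpoint
      have h2 : F' 1 = ψ 1 := if_neg (not_le.2 hτ1)
      rw [h2, hψe' 1 he'1, hG1]
    · -- Rel : agreement below τ
      intro t ht
      exact if_pos ht
    · -- Rel : ball above τ
      intro t ht
      have hmem : ∀ u : ℝ, G u ∈ EMetric.closedBall x (R (k+1)) :=
        fun u => hball (k+1) (hJ (hGJ u))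
      by_cases ht' : t ≤ τ
      · have hteq : t = τ := le_antisymm ht' ht
        have : F' t = F t := if_pos ht'
        rw [this, hteq, ← hσ]
        exact hmem σ
      · have : F' t = ψ t := if_neg ht'
        rw [this, hψdef]
        exact hmem _

lemma isClosed_eClosedBall {Y : Type*} [PseudoEMetricSpace Y] (x : Y) (r : ℝ≥0∞) :
    IsClosed (EMetric.closedBall x r) := by
  have : EMetric.closedBall x r = (fun y => edist y x) ⁻¹' (Iic r) := rfl
  rw [this]
  exact isClosed_Iic.preimage (continuous_id.edist continuous_const)

lemma chain_arc (hAC : ∀ k, ArcConnected (H k)) (hv : ∀ k, v k ∈ H k ∧ v (k+1) ∈ H k)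
    (hball : ∀ k, H k ⊆ EMetric.closedBall x (R k))
    (hRmono : Antitone R) (hR0 : Filter.Tendsto R Filter.atTop (nhds 0))
    (hx : ∀ i, x ∉ H i) (hp : p ∈ H 0) (hpx : p ≠ x) :
    ∃ J, J ⊆ (⋃ i, H i) ∪ {x} ∧ IsArcWith J p x := by
  classical
  obtain ⟨F0, hF0inv⟩ := chain_base hAC hv hp
  have step := chain_step (p := p) (x := x) (R := R) hAC hv hball
  -- dependent recursion producing the curves and cut times
  let D : ℕ → Type _ := fun k => {F : ℝ → X // ChainInv H v p k F}
  let g : ∀ k, D k := fun k => Nat.rec (⟨F0, hF0inv⟩ : D 0)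
    (fun k ih => ⟨(step k ih.1 ih.2).choose, (step k ih.1 ih.2).choose_spec.choose_spec.1⟩) k
  set Fs : ℕ → ℝ → X := fun k => (g k).1 with hFsdef
  have hInv : ∀ k, ChainInv H v p k (Fs k) := fun k => (g k).2
  set τs : ℕ → ℝ := fun k => (step k (g k).1 (g k).2).choose_spec.choose with hτsdef
  have hRel : ∀ k, ChainRel x R k (Fs k) (Fs (k+1)) (τs k) := fun k =>
    (step k (g k).1 (g k).2).choose_spec.choose_spec.2
  -- components
  have hc : ∀ k, Continuous (Fs k) := fun k => (hInv k).1
  have hinj : ∀ k, ∀ s t t' : ℝ, 0 ≤ s → s < t → t ≤ t' → t' ≤ 1 →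
      Fs k s = Fs k t → Fs k t' = Fs k t := fun k => (hInv k).2.1
  have h0 : ∀ k, Fs k 0 = p := fun k => (hInv k).2.2.1
  have hhead : ∀ k, ∀ t ≤ (0:ℝ), Fs k t = Fs k 0 := fun k => (hInv k).2.2.2.1
  have hmem : ∀ k t, Fs k t ∈ ⋃ i, H i := fun k => (hInv k).2.2.2.2.1
  have hend : ∀ k, Fs k 1 = v (k+1) := fun k => (hInv k).2.2.2.2.2.2
  have hτ0 : ∀ k, 0 ≤ τs k := fun k => (hRel k).1
  have hagree : ∀ k, ∀ t ≤ τs k, Fs (k+1) t = Fs k t := fun k => (hRel k).2.2.1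
  have hballτ : ∀ k, ∀ t, τs k ≤ t → Fs (k+1) t ∈ EMetric.closedBall x (R (k+1)) :=
    fun k => (hRel k).2.2.2
  have hxne : ∀ j t, Fs j t ≠ x := by
    intro j t hcon
    obtain ⟨s, ⟨i, rfl⟩, hsi⟩ := hmem j t
    rw [hcon] at hsi
    exact hx i hsi
  -- propagation of confinement
  have prop : ∀ l t, τs l ≤ t → ∀ i, l < i → Fs i t ∈ EMetric.closedBall x (R (l+1)) := by
    intro l t ht i hi
    induction i with
    | zero => omega
    | succ i ih =>
      rcases Nat.lt_or_ge l i with hli | hli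
      · have hprev := ih hli
        rcases le_or_gt t (τs i) with h | h
        · rw [hagree i t h]; exact hprev
        · exact EMetric.closedBall_subset_closedBall (hRmono (by omega)) (hballτ i t h.le)
      · have : l = i := by omega
        subst this
        exact hballτ l t ht
  -- the pointwise limit
  set stab : ℝ → Prop := fun t => ∃ K, ∀ j, K ≤ j → Fs j t = Fs K t with hstabdef
  set f : ℝ → X := fun t => if h : stab t then Fs h.choose t else x with hfdef
  have hfeq : ∀ t K, (∀ j, K ≤ j → Fs j t = Fs K t) → f t = Fs K t := by
    intro t K hK
    have h : stab t := ⟨K, hK⟩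
    rw [hfdef]
    simp only [dif_pos h]
    have h1 := h.choose_spec
    have e1 := h1 (max h.choose K) (le_max_left _ _)
    have e2 := hK (max h.choose K) (le_max_right _ _)
    rw [← e1, e2]
  have hfx : ∀ t, ¬ stab t → f t = x := fun t h => by rw [hfdef]; simp only [dif_neg h]
  have hfstab : ∀ t (h : stab t), ∃ K, ∀ j, K ≤ j → Fs j t = f t := by
    intro t h
    obtain ⟨K, hK⟩ := h
    exact ⟨K, fun j hj => by rw [hfeq t K hK]; exact hK j hj⟩
  have hfnex : ∀ t, f t ≠ x → stab t := by
    intro t h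
    by_contra hcon
    exact h (hfx t hcon)
  have hfball : ∀ l t, τs l ≤ t → f t ∈ EMetric.closedBall x (R (l+1)) := by
    intro l t ht
    by_cases h : stab t
    · obtain ⟨K, hK⟩ := hfstab t h
      have := prop l t ht (max K (l+1)) (lt_of_lt_of_le (Nat.lt_succ_self l) (le_max_right _ _))
      rwa [hK _ (le_max_left _ _)] at this
    · rw [hfx t h]
      exact EMetric.mem_closedBall_self
  have hchangeτ : ∀ l t, Fs (l+1) t ≠ Fs l t → τs l < t := by
    intro l t h
    by_contra hcon
    push_neg at hcon
    exact h (hagree l t hcon)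
  -- f is continuous
  have hfcont : Continuous f := by
    rw [continuous_iff_continuousAt]
    intro t₀
    by_cases hstab₀ : stab t₀
    · -- the limit value is attained ; f agrees with some Fs k₁ near t₀
      obtain ⟨K, hK⟩ := hfstab t₀ hstab₀
      have hft₀ : f t₀ ≠ x := by rw [← hK K le_rfl]; exact hxne K t₀
      have hd : 0 < edist (f t₀) x := edist_pos.2 hft₀
      obtain ⟨N, hN⟩ := Filter.eventually_atTop.1 (hR0 (Iio_mem_nhds hd))
      set k₁ := max N K with hk₁def
      have hk₁R : R (k₁ + 1) < edist (f t₀) x := hN _ (le_trans (le_max_left _ _) (Nat.le_succ _))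
      have hfk₁ : Fs k₁ t₀ = f t₀ := hK k₁ (le_max_right _ _)
      have hτgt : ∀ l, k₁ ≤ l → t₀ < τs l := by
        intro l hl
        by_contra hcon
        push_neg at hcon
        have h1 := hfball l t₀ hcon
        change edist _ _ ≤ _ at h1
        have h2 : R (l+1) ≤ R (k₁+1) := hRmono (by omega)
        exact absurd (le_trans h1 h2) (not_le.2 hk₁R)
      have hagree_below : ∀ t, t ≤ t₀ → ∀ j, k₁ ≤ j → Fs j t = Fs k₁ t := by
        intro t htle j hj
        induction j with
        | zero => interval_cases k₁ <;> rfl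
        | succ j ih =>
          rcases Nat.lt_or_ge j k₁ with h | h
          · have : k₁ = j + 1 := by omega
            rw [this]
          · rw [hagree j t (le_trans htle (hτgt j h).le)]
            exact ih h
      -- key backtracking lemma
      have hRpp : ∀ j, k₁ ≤ j → ∀ t, t₀ < t → Fs j t ≠ Fs k₁ t →
          ∃ θ, t₀ < θ ∧ θ ≤ t ∧ Fs k₁ θ ∈ EMetric.closedBall x (R (k₁+1)) := by
        intro j
        induction j using Nat.strong_induction_on with
        | _ j IH =>
          intro hk₁j t htgt hne
          have hS : ∃ l, k₁ ≤ l ∧ Fs (l+1) t ≠ Fs k₁ t := by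
            by_contra hcon
            push_neg at hcon
            apply hne
            clear hne htgt
            induction j with
            | zero =>
              have : k₁ = 0 := by omega
              rw [this]
            | succ j ih =>
              rcases Nat.lt_or_ge j k₁ with h | h
              · have : k₁ = j + 1 := by omega
                rw [this]
              · exact hcon j h
          set l := Nat.find hS with hldef
          obtain ⟨hlk₁, hlne⟩ := Nat.find_spec hS
          have hlmin : ∀ m, k₁ ≤ m → m < l → Fs (m+1) t = Fs k₁ t := by
            intro m hm hml
            have := Nat.find_min hS hml
            push_neg at this
            exact this hm
          have hbelow : ∀ m, k₁ ≤ m → m ≤ l → Fs m t = Fs k₁ t := by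
            intro m hm hml
            rcases Nat.eq_or_lt_of_le hm with h | h
            · rw [← h]
            · obtain ⟨m', rfl⟩ : ∃ m', m = m' + 1 := ⟨m - 1, by omega⟩
              exact hlmin m' (by omega) (by omega)
          have hlj : l < j := by
            by_contra hcon
            push_neg at hcon
            exact hne (hbelow j hk₁j hcon)
          have hchl : Fs (l+1) t ≠ Fs l t := by
            rw [hbelow l hlk₁ le_rfl]
            exact hlne
          have htτ : τs l < t := hchangeτ l t hchl
          have hτgtl : t₀ < τs l := hτgt l hlk₁
          have hvall : Fs l (τs l) ∈ EMetric.closedBall x (R (l+1)) := by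
            have h1 := hagree l (τs l) le_rfl
            have h2 := hballτ l (τs l) le_rfl
            rwa [h1] at h2
          by_cases hlk : Fs l (τs l) = Fs k₁ (τs l)
          · refine ⟨τs l, hτgtl, htτ.le, ?_⟩
            rw [← hlk]
            exact EMetric.closedBall_subset_closedBall (hRmono (by omega)) hvall
          · obtain ⟨θ, hθ1, hθ2, hθ3⟩ := IH l hlj hlk₁ (τs l) hτgtl hlk
            exact ⟨θ, hθ1, le_trans hθ2 htτ.le, hθ3⟩
      -- locate a neighbourhood where f = Fs k₁
      have hnotin : Fs k₁ t₀ ∉ EMetric.closedBall x (R (k₁+1)) := by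
        rw [hfk₁]; change ¬ (edist (f t₀) x ≤ _)
        exact fun hmem' => absurd hmem' (not_le.2 hk₁R)
      have hopen : IsOpen ((Fs k₁) ⁻¹' (EMetric.closedBall x (R (k₁+1)))ᶜ) :=
        (isClosed_eClosedBall x (R (k₁+1))).isOpen_compl.preimage (hc k₁)
    -- dist ball
      obtain ⟨η, hη, hηsub⟩ := Metric.isOpen_iff.1 hopen t₀ hnotin
      have hfeqloc : ∀ t, dist t t₀ < η → f t = Fs k₁ t := by
        intro t htd
        rcases le_or_gt t t₀ with hle | hgt
        · exact hfeq t k₁ (fun j hj => hagree_below t hle j hj)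
        · by_contra hne'
          have hnost : ∃ j, k₁ ≤ j ∧ Fs j t ≠ Fs k₁ t := by
            by_cases h : stab t
            · obtain ⟨K', hK'⟩ := hfstab t h
              refine ⟨max K' k₁, le_max_right _ _, ?_⟩
              rw [hK' _ (le_max_left _ _)]
              exact hne'
            · by_contra hcon
              push_neg at hcon
              exact h ⟨k₁, fun j hj => hcon j hj⟩
          obtain ⟨j, hjk, hjne⟩ := hnost
          obtain ⟨θ, hθ1, hθ2, hθ3⟩ := hRpp j hjk t hgt hjne
          have : θ ∈ Metric.ball t₀ η := by
            rw [Metric.mem_ball, Real.dist_eq, abs_sub_lt_iff]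
            rw [Real.dist_eq, abs_sub_lt_iff] at htd
            constructor <;> [linarith [htd.1]; linarith [htd.2]]
          exact (hηsub this) hθ3
      have hev : ∀ᶠ t in nhds t₀, f t = Fs k₁ t := by
        rw [Metric.eventually_nhds_iff]
        exact ⟨η, hη, fun {t} ht => hfeqloc t ht⟩
      exact ((hc k₁).continuousAt).congr (Filter.EventuallyEq.symm hev)
    · -- f t₀ = x : use the confinement
      have hft₀ : f t₀ = x := hfx t₀ hstab₀
      rw [ContinuousAt, hft₀, EMetric.tendsto_nhds]
      intro ε hε
      obtain ⟨N, hN⟩ := Filter.eventually_atTop.1 (hR0 (Iio_mem_nhds hε))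
      have hch : ∃ l, N ≤ l ∧ Fs (l+1) t₀ ≠ Fs l t₀ := by
        by_contra hcon
        push_neg at hcon
        apply hstab₀
        refine ⟨N, ?_⟩
        intro j hj
        induction j with
        | zero =>
          have : N = 0 := by omega
          rw [this]
        | succ j ih =>
          rcases Nat.lt_or_ge j N with h | h
          · have : N = j + 1 := by omega
            rw [this]
          · rw [hcon j h]
            exact ih h
      obtain ⟨l, hlN, hlch⟩ := hch
      have htτ : τs l < t₀ := hchangeτ l t₀ hlch
      filter_upwards [eventually_gt_nhds htτ] with t htgt
      have := hfball l t htgt.le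
      change edist _ _ ≤ _ at this
      exact lt_of_le_of_lt (le_trans this (hRmono (by omega : N ≤ l + 1))) (by
        have := hN (l+1) (by omega)
        exact lt_of_le_of_lt le_rfl (hN N le_rfl) ) |>.trans_le le_rfl
  -- endpoint values
  have hf0 : f 0 = p := by
    rw [hfeq 0 0 (fun j _ => by rw [h0 j, h0 0])]
    exact h0 0
  have hRsucc : Filter.Tendsto (fun j => R (j+1)) Filter.atTop (nhds 0) :=
    hR0.comp (Filter.tendsto_add_atTop_nat 1)
  have hf1 : f 1 = x := by
    by_cases h : stab 1
    · exfalso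
      obtain ⟨K, hK⟩ := hfstab 1 h
      have hbound : ∀ j, K ≤ j → edist (f 1) x ≤ R (j+1) := by
        intro j hj
        rw [← hK j hj, hend j]
        exact hball (j+1) (hv (j+1)).1
      have h1 : edist (f 1) x ≤ 0 :=
        ge_of_tendsto hRsucc (Filter.eventually_atTop.2 ⟨K, hbound⟩)
      have h2 : f 1 = x := by
        rw [← edist_eq_zero]
        exact le_antisymm h1 zero_le
      rw [← hK K le_rfl] at h2
      exact hxne K 1 h2
    · exact hfx 1 h
  -- injectivity away from x
  have hinjf : ∀ s t : ℝ, 0 ≤ s → s < t → t ≤ 1 → f s ≠ x → f t ≠ x → f s ≠ f t := by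
    intro s t hs hst ht1 hfs hft heq
    obtain ⟨Ks, hKs⟩ := hfstab s (hfnex s hfs)
    obtain ⟨Kt, hKt⟩ := hfstab t (hfnex t hft)
    have hbound : ∀ j, max Ks Kt ≤ j → edist (f t) x ≤ R (j+1) := by
      intro j hj
      have e1 : Fs j s = Fs j t := by
        rw [hKs j (le_trans (le_max_left _ _) hj), hKt j (le_trans (le_max_right _ _) hj), heq]
      have e2 : Fs j 1 = Fs j t := hinj j s t 1 hs hst ht1 le_rfl e1
      rw [← hKt j (le_trans (le_max_right _ _) hj), ← e2, hend j]
      exact hball (j+1) (hv (j+1)).1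
    have h1 : edist (f t) x ≤ 0 :=
      ge_of_tendsto hRsucc (Filter.eventually_atTop.2 ⟨max Ks Kt, hbound⟩)
    exact hft (by rw [← edist_eq_zero]; exact le_antisymm h1 zero_le)
  -- values of f lie in the union together with x
  have hfrange : ∀ t, f t ∈ (⋃ i, H i) ∪ {x} := by
    intro t
    by_cases h : stab t
    · obtain ⟨K, hK⟩ := hfstab t h
      left
      rw [← hK K le_rfl]
      exact hmem K t
    · right
      rw [hfx t h]
      rfl
  -- f = p on (-∞, 0]
  have hfneg : ∀ t : ℝ, t ≤ 0 → f t = p := by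
    intro t ht
    rw [hfeq t 0 (fun j _ => by rw [hhead j t ht, hhead 0 t ht, h0 j, h0 0])]
    rw [hhead 0 t ht, h0 0]
  -- the first time f reaches x
  set Z : Set ℝ := {t | f t = x} with hZdef
  have hZ1 : (1:ℝ) ∈ Z := hf1
  have hZpos : ∀ t ∈ Z, 0 < t := by
    intro t ht
    by_contra hcon
    push_neg at hcon
    rw [mem_setOf_eq, hfneg t hcon] at ht
    exact hpx ht
  have hZbdd : BddBelow Z := ⟨0, fun t ht => (hZpos t ht).le⟩
  have hZclosed : IsClosed Z := by
    have : Z = f ⁻¹' {x} := rfl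
    rw [this]
    exact (isClosed_singleton).preimage hfcont
  set T' := sInf Z with hT'def
  have hT'Z : T' ∈ Z := hZclosed.csInf_mem ⟨1, hZ1⟩ hZbdd
  have hT'x : f T' = x := hT'Z
  have hT'pos : 0 < T' := hZpos T' hT'Z
  have hT'le1 : T' ≤ 1 := csInf_le hZbdd hZ1
  have hT'lt : ∀ t : ℝ, t < T' → f t ≠ x := by
    intro t htl heq
    exact absurd (csInf_le hZbdd heq) (not_le.2 htl)
  -- the final arc
  refine ⟨Set.range (fun s : unitInterval => f (T' * (s:ℝ))), ?_, ?_⟩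
  · rintro z ⟨s, rfl⟩
    exact hfrange _
  · refine ⟨fun s => f (T' * (s:ℝ)), hfcont.comp (continuous_const.mul continuous_subtype_val), ?_, rfl, ?_, ?_⟩
    · intro s t heq
      by_contra hne
      have key : ∀ a b : unitInterval, (a:ℝ) < (b:ℝ) →
          f (T' * (a:ℝ)) ≠ f (T' * (b:ℝ)) := by
        intro a b hab
        have ha0 : 0 ≤ T' * (a:ℝ) := mul_nonneg hT'pos.le a.2.1
        have hlt : T' * (a:ℝ) < T' * (b:ℝ) := mul_lt_mul_of_pos_left hab hT'pos
        have hble : T' * (b:ℝ) ≤ T' := by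
          nth_rewrite 2 [← mul_one T']
          exact mul_le_mul_of_nonneg_left b.2.2 hT'pos.le
        rcases lt_or_eq_of_le hble with hblt | hbeq
        · exact hinjf _ _ ha0 hlt (le_trans hblt.le hT'le1)
            (hT'lt _ (lt_trans hlt hblt)) (hT'lt _ hblt)
        · rw [hbeq, hT'x]
          exact hT'lt _ (lt_of_lt_of_le hlt hble)
      rcases lt_or_gt_of_ne (fun hc : (s:ℝ) = (t:ℝ) => hne (Subtype.ext hc)) with h | h
      · exact key s t h heq
      · exact key t s h heq.symm
    · show f (T' * ((0 : unitInterval) : ℝ)) = p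
      norm_num [hf0]
    · show f (T' * ((1 : unitInterval) : ℝ)) = x
      norm_num [hT'x]

end Chain

section Union
variable {X : Type*} [MetricSpace X]

/-- An arc between two points of `A ∪ B` through a common point. -/
lemma arc_through {A B : Set X} {p q y : X} (hA : ArcConnected A) (hB : ArcConnected B)
    (hpA : p ∈ A) (hyA : y ∈ A) (hyB : y ∈ B) (hqB : q ∈ B) (hpq : p ≠ q) :
    ∃ J, J ⊆ A ∪ B ∧ IsArcWith J p q := by
  by_cases hpy : p = y
  · subst hpy
    obtain ⟨J, hJB, hJ⟩ := hB p hyB q hqB hpq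
    exact ⟨J, hJB.trans subset_union_right, hJ⟩
  by_cases hqy : q = y
  · subst hqy
    obtain ⟨J, hJA, hJ⟩ := hA p hpA q hyA hpq
    exact ⟨J, hJA.trans subset_union_left, hJ⟩
  obtain ⟨J₁, hJ₁A, hJ₁⟩ := hA p hpA y hyA hpy
  obtain ⟨J₂, hJ₂B, hJ₂⟩ := hB y hyB q hqB (Ne.symm hqy)
  obtain ⟨F, ⟨hFc, hFi, hF0, hF1⟩, hFim⟩ := isArcWith_toReal hJ₁
  obtain ⟨G, ⟨hGc, hGi, hG0, hG1⟩, hGim⟩ := isArcWith_toReal hJ₂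
  obtain ⟨H, hHc, hHi, hH0, hH1, hHim⟩ :=
    glue_arcs hFc hFi hF0 hF1 hGc hGi hG0 hG1 hpq
  refine ⟨H '' Icc 0 1, ?_, realArc_toIsArcWith ⟨hHc, hHi, hH0, hH1⟩⟩
  refine hHim.trans ?_
  rw [hFim, hGim]
  exact union_subset_union hJ₁A hJ₂B

lemma arcConnected_union {A B : Set X} (hA : ArcConnected A) (hB : ArcConnected B)
    (hAB : (A ∩ B).Nonempty) : ArcConnected (A ∪ B) := by
  obtain ⟨y, hyA, hyB⟩ := hAB
  rintro p hp q hq hpq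
  rcases hp with hp | hp <;> rcases hq with hq | hq
  · obtain ⟨J, hJ, h⟩ := hA p hp q hq hpq
    exact ⟨J, hJ.trans subset_union_left, h⟩
  · exact arc_through hA hB hp hyA hyB hq hpq
  · obtain ⟨J, hJ, h⟩ := arc_through hB hA hp hyB hyA hq hpq
    exact ⟨J, hJ.trans (by rw [union_comm]), h⟩
  · obtain ⟨J, hJ, h⟩ := hB p hp q hq hpq
    exact ⟨J, hJ.trans subset_union_right, h⟩

lemma arcDelta_le {x y : X} {H : Set X} (h : ArcConnected H) (hx : x ∈ H) (hy : y ∈ H) :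
    arcDelta x y ≤ EMetric.diam H :=
  sInf_le ⟨H, ⟨h, hx, hy⟩, rfl⟩

lemma arcDelta_self (x : X) : arcDelta x x = 0 := by
  have h : ArcConnected ({x} : Set X) := by
    rintro a ha b hb hab
    rw [mem_singleton_iff] at ha hb
    exact absurd (ha.trans hb.symm) hab
  have := arcDelta_le h (mem_singleton x) (mem_singleton x)
  rw [EMetric.diam, Metric.ediam_singleton] at this
  exact le_antisymm this zero_le

lemma edist_le_arcDelta (x y : X) : edist x y ≤ arcDelta x y := by
  apply le_sInf
  rintro d ⟨H, ⟨-, hx, hy⟩, rfl⟩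
  exact EMetric.edist_le_diam_of_mem hx hy

lemma arcDelta_comm (x y : X) : arcDelta x y = arcDelta y x := by
  unfold arcDelta
  have : {H : Set X | ArcConnected H ∧ x ∈ H ∧ y ∈ H} = {H : Set X | ArcConnected H ∧ y ∈ H ∧ x ∈ H} := by
    ext H
    simp only [mem_setOf_eq]
    tauto
  rw [this]

lemma arcDelta_triangle (x y z : X) : arcDelta x z ≤ arcDelta x y + arcDelta y z := by
  apply le_of_forall_gt_imp_ge_of_dense
  intro c hc
  have h1 : arcDelta x y < ⊤ := lt_of_le_of_lt le_self_add (lt_of_lt_of_le hc le_top)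
  have h2 : arcDelta y z < ⊤ := lt_of_le_of_lt le_add_self (lt_of_lt_of_le hc le_top)
  -- pick η with arcDelta x y + arcDelta y z + η ≤ c : instead pick members below midpoints
  obtain ⟨η, hη0, hηc⟩ : ∃ η : ℝ≥0∞, 0 < η ∧ arcDelta x y + arcDelta y z + (η + η) ≤ c := by
    obtain ⟨d, hd1, hd2⟩ := exists_between hc
    refine ⟨(d - (arcDelta x y + arcDelta y z)) / 2, ?_, ?_⟩
    · simp only [ENNReal.div_pos_iff]
      exact ⟨(tsub_pos_of_lt hd1).ne', ENNReal.ofNat_ne_top⟩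
    · have : (d - (arcDelta x y + arcDelta y z)) / 2 + (d - (arcDelta x y + arcDelta y z)) / 2
          = d - (arcDelta x y + arcDelta y z) := ENNReal.add_halves _
      rw [this, add_tsub_cancel_of_le hd1.le]
      exact hd2.le
  have hxy : arcDelta x y < arcDelta x y + η := ENNReal.lt_add_right h1.ne hη0.ne'
  have hyz : arcDelta y z < arcDelta y z + η := ENNReal.lt_add_right h2.ne hη0.ne'
  obtain ⟨d₁, ⟨H₁, ⟨hH₁, hxH₁, hyH₁⟩, rfl⟩, hd₁⟩ := sInf_lt_iff.mp hxy
  obtain ⟨d₂, ⟨H₂, ⟨hH₂, hyH₂, hzH₂⟩, rfl⟩, hd₂⟩ := sInf_lt_iff.mp hyz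
  have hu : ArcConnected (H₁ ∪ H₂) := arcConnected_union hH₁ hH₂ ⟨y, hyH₁, hyH₂⟩
  calc arcDelta x z ≤ EMetric.diam (H₁ ∪ H₂) :=
        arcDelta_le hu (subset_union_left hxH₁) (subset_union_right hzH₂)
    _ ≤ EMetric.diam H₁ + edist y y + EMetric.diam H₂ := EMetric.diam_union hyH₁ hyH₂
    _ = EMetric.diam H₁ + EMetric.diam H₂ := by simp
    _ ≤ (arcDelta x y + η) + (arcDelta y z + η) := add_le_add hd₁.le hd₂.le
    _ = arcDelta x y + arcDelta y z + (η + η) := by ring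
    _ ≤ c := hηc

end Union

section Complete
variable {X : Type*} [MetricSpace X]

theorem arcDelta_complete (hcomp : CompleteSpace X) (u : ℕ → X)
    (hu : ∀ ε : ℝ≥0∞, 0 < ε → ∃ N : ℕ, ∀ m ≥ N, ∀ n ≥ N, arcDelta (u m) (u n) < ε) :
    ∃ x : X, Filter.Tendsto (fun n => arcDelta (u n) x) Filter.atTop (nhds 0) := by
  classical
  have hcauchy : CauchySeq u := by
    rw [EMetric.cauchySeq_iff]
    intro ε hε
    obtain ⟨N, hN⟩ := hu ε hε
    exact ⟨N, fun m hm n hn => lt_of_le_of_lt (edist_le_arcDelta _ _) (hN m hm n hn)⟩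
  obtain ⟨x, hx⟩ := cauchySeq_tendsto_of_complete hcauchy
  refine ⟨x, ?_⟩
  rw [ENNReal.tendsto_atTop_zero]
  intro ε hε
  by_cases hεtop : ε = ⊤
  · exact ⟨0, fun n _ => by rw [hεtop]; exact le_top⟩
  set q : ℝ≥0∞ := 2⁻¹ with hqdef
  have hq0 : q ≠ 0 := by simp [hqdef]
  have hq1 : q < 1 := by rw [hqdef]; simp [ENNReal.inv_lt_one]
  have hqtop : q ≠ ⊤ := by simp [hqdef]
  have h2q : 2 * q = 1 := by
    rw [hqdef, mul_comm]
    exact ENNReal.inv_mul_cancel (by norm_num) (by norm_num)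
  have hqpowmono : ∀ k j : ℕ, k ≤ j → q^j ≤ q^k :=
    fun k j h => pow_le_pow_of_le_one zero_le hq1.le h
  set εk : ℕ → ℝ≥0∞ := fun k => ε * q^(k+4) with hεkdef
  have hεk0 : ∀ k, 0 < εk k := by
    intro k
    rw [hεkdef]
    simp only [pos_iff_ne_zero]
    exact mul_ne_zero hε.ne' (pow_ne_zero _ hq0)
  choose Ns hNs using fun k => hu (εk k) (hεk0 k)
  -- given n ≥ Ns 0, construct the chain starting at u n
  refine ⟨Ns 0, ?_⟩
  intro n hn
  -- the subsequence
  set φ : ℕ → ℕ := fun k => Nat.rec n (fun k ih => max (ih + 1) (max (Ns k) (Ns (k+1)))) k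
    with hφdef
  have hφ0 : φ 0 = n := rfl
  have hφsucc : ∀ k, φ (k+1) = max (φ k + 1) (max (Ns k) (Ns (k+1))) := fun k => rfl
  have hφNs : ∀ k, Ns k ≤ φ k := by
    intro k
    cases k with
    | zero => exact hn
    | succ k =>
      rw [hφsucc k]
      exact le_trans (le_max_right _ _) (le_max_right _ _)
  have hφNs' : ∀ k, Ns k ≤ φ (k+1) := by
    intro k
    rw [hφsucc k]
    exact le_trans (le_max_left _ _) (le_max_right _ _)
  have hφmono : ∀ k, φ k < φ (k+1) := by
    intro k
    rw [hφsucc k]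
    exact lt_of_lt_of_le (Nat.lt_succ_self _) (le_max_left _ _)
  have hφge : ∀ k, k ≤ φ k := by
    intro k
    induction k with
    | zero => exact Nat.zero_le _
    | succ k ih => exact lt_of_le_of_lt ih (hφmono k)
  set v : ℕ → X := fun k => u (φ k) with hvdef
  have hvx : Tendsto v atTop (nhds x) :=
    hx.comp (Filter.tendsto_atTop_atTop.2 fun b => ⟨b, fun a ha => le_trans ha (hφge a)⟩)
  have hδ : ∀ k, arcDelta (v k) (v (k+1)) < εk k :=
    fun k => hNs k (φ k) (hφNs k) (φ (k+1)) (hφNs' k)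
  have hHex : ∀ k, ∃ Hk : Set X, ArcConnected Hk ∧ v k ∈ Hk ∧ v (k+1) ∈ Hk ∧
      EMetric.diam Hk < εk k := by
    intro k
    obtain ⟨d, ⟨Hk, ⟨h1, h2, h3⟩, rfl⟩, hd⟩ := sInf_lt_iff.mp (hδ k)
    exact ⟨Hk, h1, h2, h3, hd⟩
  choose Hs hH1 hH2 hH3 hH4 using hHex
  -- distances along the chain
  have hdist : ∀ k j, k ≤ j → edist (v k) (v j) ≤ ∑ i ∈ Finset.Ico k j, εk i := by
    intro k j
    induction j with
    | zero =>
      intro hk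
      have : k = 0 := Nat.le_zero.1 hk
      subst this
      simp
    | succ j ih =>
      intro hk
      rcases Nat.lt_or_ge k (j+1) with h | h
      · have hkj : k ≤ j := by omega
        have h1 := ih hkj
        have h2 : edist (v j) (v (j+1)) ≤ εk j :=
          le_trans (EMetric.edist_le_diam_of_mem (hH2 j) (hH3 j)) (hH4 j).le
        calc edist (v k) (v (j+1)) ≤ edist (v k) (v j) + edist (v j) (v (j+1)) :=
              edist_triangle _ _ _
          _ ≤ (∑ i ∈ Finset.Ico k j, εk i) + εk j := add_le_add h1 h2
          _ = ∑ i ∈ Finset.Ico k (j+1), εk i := (Finset.sum_Ico_succ_top hkj _).symm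
      · have : k = j + 1 := by omega
        subst this
        simp
  have hgeo : ∀ k : ℕ, (∑' i : ℕ, εk (k + i)) = ε * q^(k+3) := by
    intro k
    have h1 : ∀ i : ℕ, εk (k + i) = (ε * q^(k+4)) * q^i := by
      intro i
      rw [hεkdef]
      simp only []
      rw [mul_assoc, ← pow_add]
      congr 2
      omega
    rw [tsum_congr h1, ENNReal.tsum_mul_left, ENNReal.tsum_geometric,
      ENNReal.one_sub_inv_two]
    rw [hqdef, inv_inv]
    have hq2 : (2:ℝ≥0∞)⁻¹ ^ (k + 4) * 2 = (2:ℝ≥0∞)⁻¹ ^ (k+3) := by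
      rw [show k + 4 = (k+3)+1 by omega, pow_succ, mul_assoc]
      rw [show ((2:ℝ≥0∞)⁻¹ * 2) = 1 from ENNReal.inv_mul_cancel (by norm_num) (by norm_num)]
      rw [mul_one]
    rw [mul_assoc, hq2]
  have hsumle : ∀ k j, (∑ i ∈ Finset.Ico k j, εk i) ≤ ε * q^(k+3) := by
    intro k j
    rw [Finset.sum_Ico_eq_sum_range]
    calc (∑ i ∈ Finset.range (j - k), εk (k + i)) ≤ ∑' i : ℕ, εk (k + i) :=
          ENNReal.sum_le_tsum _
      _ = ε * q^(k+3) := hgeo k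
  have hvxdist : ∀ k, edist (v k) x ≤ ε * q^(k+3) := by
    intro k
    have h1 : Tendsto (fun j => edist (v k) (v j)) atTop (nhds (edist (v k) x)) :=
      Filter.Tendsto.edist tendsto_const_nhds hvx
    refine le_of_tendsto h1 (Filter.eventually_atTop.2 ⟨k, fun j hj => ?_⟩)
    exact le_trans (hdist k j hj) (hsumle k j)
  set Rk : ℕ → ℝ≥0∞ := fun k => ε * q^(k+2) with hRkdef
  have hball : ∀ k, Hs k ⊆ EMetric.closedBall x (Rk k) := by
    intro k h hh
    show edist h x ≤ Rk k
    calc edist h x ≤ edist h (v k) + edist (v k) x := edist_triangle _ _ _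
      _ ≤ εk k + ε * q^(k+3) :=
          add_le_add (le_trans (EMetric.edist_le_diam_of_mem hh (hH2 k)) (hH4 k).le) (hvxdist k)
      _ ≤ ε * q^(k+3) + ε * q^(k+3) := by
          refine add_le_add ?_ le_rfl
          rw [hεkdef]
          exact mul_le_mul_right (hqpowmono (k+3) (k+4) (by omega)) _
      _ = Rk k := by
          rw [hRkdef, ← two_mul, ← mul_assoc, mul_comm (2:ℝ≥0∞) ε, mul_assoc]
          congr 1
          rw [show k + 3 = (k+2) + 1 by omega, pow_succ, mul_comm (2:ℝ≥0∞), mul_assoc,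
            mul_comm q 2, h2q, mul_one]
  have hRmono : Antitone Rk := fun k j hkj =>
    mul_le_mul_right (hqpowmono (k+2) (j+2) (by omega)) _
  have hR0 : Tendsto Rk atTop (nhds 0) := by
    have h1 : Tendsto (fun k : ℕ => q^k) atTop (nhds 0) :=
      ENNReal.tendsto_pow_atTop_nhds_zero_of_lt_one hq1
    have h2 : Tendsto (fun k : ℕ => (ε * q^2) * q^k) atTop (nhds ((ε * q^2) * 0)) :=
      ENNReal.Tendsto.const_mul h1 (Or.inr (ENNReal.mul_ne_top hεtop (by
        rw [hqdef]; simp)))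
    rw [mul_zero] at h2
    refine h2.congr fun k => ?_
    rw [hRkdef]
    simp only []
    rw [mul_assoc, ← pow_add]
    congr 2
    omega
  -- the diameter bound
  have hdiamball : ∀ S : Set X, S ⊆ EMetric.closedBall x (Rk 0) → EMetric.diam S ≤ ε := by
    intro S hS
    calc EMetric.diam S ≤ EMetric.diam (EMetric.closedBall x (Rk 0)) := EMetric.diam_mono hS
      _ ≤ 2 * Rk 0 := EMetric.diam_closedBall
      _ ≤ ε := by
          rw [hRkdef]
          simp only []
          rw [← mul_assoc, mul_comm (2:ℝ≥0∞) ε, mul_assoc]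
          calc ε * (2 * q^(0+2)) = ε * q := by
                congr 1
                rw [show (0:ℕ) + 2 = 1 + 1 by rfl, pow_succ, pow_one, ← mul_assoc, h2q, one_mul]
            _ ≤ ε * 1 := mul_le_mul_right hq1.le _
            _ = ε := mul_one _
  -- finite unions of the chain sets are arc-connected
  set U : ℕ → Set X := fun m => ⋃ k, ⋃ (_ : k ≤ m), Hs k with hUdef
  have hUsub : ∀ m, U m ⊆ ⋃ i, Hs i := by
    intro m z hz
    obtain ⟨k, _, hk⟩ := mem_iUnion₂.1 hz
    exact mem_iUnion.2 ⟨k, hk⟩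
  have hUAC : ∀ m, ArcConnected (U m) := by
    intro m
    induction m with
    | zero =>
      have : U 0 = Hs 0 := by
        rw [hUdef]
        simp
      rw [this]
      exact hH1 0
    | succ m ih =>
      have : U (m+1) = U m ∪ Hs (m+1) := Set.biUnion_le_succ Hs m
      rw [this]
      refine arcConnected_union ih (hH1 (m+1)) ⟨v (m+1), ?_, hH2 (m+1)⟩
      exact mem_iUnion₂.2 ⟨m, le_refl m, hH3 m⟩
  have hUmem : ∀ k m, k ≤ m → ∀ z ∈ Hs k, z ∈ U m :=
    fun k m hkm z hz => mem_iUnion₂.2 ⟨k, hkm, hz⟩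
  -- main case split : does x belong to some chain set?
  by_cases hxH : ∃ i, x ∈ Hs i
  · obtain ⟨i, hxi⟩ := hxH
    have h1 : arcDelta (u n) x ≤ EMetric.diam (U i) :=
      arcDelta_le (hUAC i) (hUmem 0 i (Nat.zero_le i) (u n) (hH2 0))
        (hUmem i i le_rfl x hxi)
    refine le_trans h1 (hdiamball _ ?_)
    intro z hz
    obtain ⟨k, hk, hzk⟩ := mem_iUnion₂.1 hz
    exact EMetric.closedBall_subset_closedBall (hRmono (Nat.zero_le k)) (hball k hzk)
  · push_neg at hxH
    set G : Set X := (⋃ i, Hs i) ∪ {x} with hGdef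
    have hGAC : ArcConnected G := by
      rintro a ha b hb hab
      have harc_to_x : ∀ c ∈ ⋃ i, Hs i, c ≠ x → ∃ J, J ⊆ G ∧ IsArcWith J c x := by
        intro c hc hcx
        obtain ⟨i, hci⟩ := mem_iUnion.1 hc
        obtain ⟨J, hJsub, hJarc⟩ := chain_arc (H := fun k => Hs (k + i)) (v := fun k => v (k + i))
          (x := x) (R := fun k => Rk (k + i))
          (fun k => hH1 (k + i)) (fun k => ⟨hH2 (k + i), by
            show v (k + 1 + i) ∈ Hs (k + i)
            have heq : k + 1 + i = k + i + 1 := by omega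
            rw [heq]
            exact hH3 (k + i)⟩)
          (fun k => hball (k + i)) (fun k j hkj => hRmono (by omega))
          (hR0.comp (tendsto_add_atTop_nat i)) (fun k => hxH (k + i)) (by simpa using hci) hcx
        refine ⟨J, le_trans hJsub ?_, hJarc⟩
        rw [hGdef]
        apply union_subset_union _ (subset_refl _)
        intro z hz
        obtain ⟨k, hk⟩ := mem_iUnion.1 hz
        exact mem_iUnion.2 ⟨k + i, hk⟩
      rcases ha with haU | hax
      · rcases hb with hbU | hbx
        · -- both in the union
          obtain ⟨ia, hia⟩ := mem_iUnion.1 haU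
          obtain ⟨ib, hib⟩ := mem_iUnion.1 hbU
          obtain ⟨J, hJsub, hJarc⟩ := hUAC (max ia ib) a
            (hUmem ia _ (le_max_left _ _) a hia) b (hUmem ib _ (le_max_right _ _) b hib) hab
          exact ⟨J, le_trans hJsub (le_trans (hUsub _) subset_union_left), hJarc⟩
        · rw [mem_singleton_iff] at hbx
          subst hbx
          exact harc_to_x a haU hab
      · rw [mem_singleton_iff] at hax
        subst hax
        rcases hb with hbU | hbx
        · obtain ⟨J, hJsub, hJarc⟩ := harc_to_x b hbU (Ne.symm hab)
          exact ⟨J, hJsub, isArcWith_symm hJarc⟩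
        · rw [mem_singleton_iff] at hbx
          exact absurd hbx.symm hab
    have h1 : arcDelta (u n) x ≤ EMetric.diam G := by
      refine arcDelta_le hGAC ?_ (Or.inr rfl)
      left
      exact mem_iUnion.2 ⟨0, hH2 0⟩
    refine le_trans h1 (hdiamball _ ?_)
    rintro z (hz | hz)
    · obtain ⟨k, hk⟩ := mem_iUnion.1 hz
      exact EMetric.closedBall_subset_closedBall (hRmono (Nat.zero_le k)) (hball k hk)
    · rw [mem_singleton_iff] at hz
      subst hz
      exact EMetric.mem_closedBall_self


end Complete

/-- Basic properties of the canonical arc-pseudo-metric: it is a pseudo-metric dominating `d`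
(hence vanishing only on the diagonal), and it is complete whenever `d` is complete. -/
theorem stmt6 {X : Type*} [MetricSpace X] :
    (∀ x : X, arcDelta x x = 0) ∧
    (∀ x y : X, edist x y ≤ arcDelta x y) ∧
    (∀ x y : X, arcDelta x y = 0 → x = y) ∧
    (∀ x y : X, arcDelta x y = arcDelta y x) ∧
    (∀ x y z : X, arcDelta x z ≤ arcDelta x y + arcDelta y z) ∧
    (CompleteSpace X → ∀ u : ℕ → X,
      (∀ ε : ℝ≥0∞, 0 < ε → ∃ N : ℕ, ∀ m ≥ N, ∀ n ≥ N, arcDelta (u m) (u n) < ε) →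
      ∃ x : X, Filter.Tendsto (fun n => arcDelta (u n) x) Filter.atTop (nhds 0)) := by
  refine ⟨arcDelta_self, edist_le_arcDelta, ?_, arcDelta_comm, arcDelta_triangle, ?_⟩
  · intro x y h
    have h1 := edist_le_arcDelta x y
    rw [h] at h1
    exact edist_eq_zero.1 (le_antisymm h1 zero_le)
  · intro hc u hu
    exact arcDelta_complete hc u hu
end

section
/- Let (X,d) be a metric space and let δ be its canonical arc-pseudo-metric. Then for every x₀ ∈ X and every real r with 0 < r < ∞, the open δ-ball B = { y ∈ X : δ(x₀,y) < r } is arc-connected: any two distinct points of B are the endpoints of an arc contained in B. -/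
open Set TopologicalSpace MeasureTheory
open scoped ENNReal

lemma arcConcat {X : Type*} [TopologicalSpace X] [T2Space X]
    {J₁ J₂ : Set X} {x z y : X} (h₁ : IsArcWith J₁ x z) (h₂ : IsArcWith J₂ z y)
    (hxy : x ≠ y) : ∃ J, J ⊆ J₁ ∪ J₂ ∧ IsArcWith J x y := by
  obtain ⟨f, hfc, hfi, hfr, hf0, hf1⟩ := h₁
  obtain ⟨g, hgc, hgi, hgr, hg0, hg1⟩ := h₂
  set F : ℝ → X := f ∘ projIcc 0 1 zero_le_one with hFdef
  set G : ℝ → X := g ∘ projIcc 0 1 zero_le_one with hGdef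
  have hFc : Continuous F := hfc.comp continuous_projIcc
  have hGc : Continuous G := hgc.comp continuous_projIcc
  have hFval : ∀ a (ha : a ∈ Icc (0:ℝ) 1), F a = f ⟨a, ha⟩ := by
    intro a ha; exact congrArg f (projIcc_of_mem zero_le_one ha)
  have hGval : ∀ a (ha : a ∈ Icc (0:ℝ) 1), G a = g ⟨a, ha⟩ := by
    intro a ha; exact congrArg g (projIcc_of_mem zero_le_one ha)
  have hF0 : F 0 = x := by
    rw [hFval 0 ⟨le_refl 0, zero_le_one⟩, ← hf0]; rfl
  have hG1 : G 1 = y := by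
    rw [hGval 1 ⟨zero_le_one, le_refl 1⟩, ← hg1]; rfl
  have hFinj : ∀ a (ha : a ∈ Icc (0:ℝ) 1) b (hb : b ∈ Icc (0:ℝ) 1), F a = F b → a = b := by
    intro a ha b hb h
    rw [hFval a ha, hFval b hb] at h
    exact congrArg Subtype.val (hfi h)
  have hGinj : ∀ a (ha : a ∈ Icc (0:ℝ) 1) b (hb : b ∈ Icc (0:ℝ) 1), G a = G b → a = b := by
    intro a ha b hb h
    rw [hGval a ha, hGval b hb] at h
    exact congrArg Subtype.val (hgi h)
  set T : Set ℝ := Icc 0 1 ∩ F ⁻¹' (range g) with hTdef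
  have h1T : (1:ℝ) ∈ T := by
    refine ⟨⟨zero_le_one, le_refl 1⟩, ?_⟩
    show F 1 ∈ range g
    rw [hFval 1 ⟨zero_le_one, le_refl 1⟩]
    refine ⟨0, ?_⟩
    rw [hg0, ← hf1]; rfl
  have hTc : IsClosed T := isClosed_Icc.inter (((isCompact_range hgc).isClosed).preimage hFc)
  have hTb : BddBelow T := ⟨0, fun a ha => ha.1.1⟩
  set t₀ : ℝ := sInf T with ht₀def
  have ht₀T : t₀ ∈ T := hTc.csInf_mem ⟨1, h1T⟩ hTb
  have ht₀I : t₀ ∈ Icc (0:ℝ) 1 := ht₀T.1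
  obtain ⟨s₀, hs₀⟩ : F t₀ ∈ range g := ht₀T.2
  have hmin : ∀ a, a ∈ T → t₀ ≤ a := fun a ha => csInf_le hTb ha
  have hs₀I := s₀.2
  -- the two "halves"
  by_cases ht0 : t₀ = 0
  · -- x is on the second arc: use a subarc of J₂ from x to y
    have hgx : g s₀ = x := by rw [hs₀, ht0, hF0]
    have hs1 : (s₀ : ℝ) ≠ 1 := by
      intro h
      apply hxy
      rw [← hgx, ← hg1]
      congr 1
      exact Subtype.ext h
    have hs1' : (s₀ : ℝ) < 1 := lt_of_le_of_ne hs₀I.2 hs1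
    set h : unitInterval → X := fun t =>
      g ⟨(s₀:ℝ) + (t:ℝ) * (1 - s₀), by
        constructor
        · nlinarith [s₀.2.1, s₀.2.2, t.2.1, t.2.2]
        · nlinarith [s₀.2.1, s₀.2.2, t.2.1, t.2.2]⟩ with hhdef
    refine ⟨range h, ?_, h, ?_, ?_, rfl, ?_, ?_⟩
    · rintro _ ⟨t, rfl⟩
      exact Or.inr (hgr ▸ mem_range_self _)
    · apply hgc.comp
      apply Continuous.subtype_mk
      fun_prop
    · intro a b hab
      have := hgi hab
      have h2 : (s₀:ℝ) + (a:ℝ) * (1 - s₀) = (s₀:ℝ) + (b:ℝ) * (1 - s₀) :=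
        congrArg Subtype.val this
      have : (a:ℝ) = b := by
        have h3 : (1:ℝ) - s₀ ≠ 0 := by linarith
        exact mul_right_cancel₀ h3 (by linarith)
      exact Subtype.ext this
    · show g _ = x
      rw [← hgx]; congr 1; apply Subtype.ext; show (s₀:ℝ) + (0:ℝ) * _ = s₀; ring
    · show g _ = y
      rw [← hg1]; congr 1; apply Subtype.ext; show (s₀:ℝ) + (1:ℝ) * (1 - s₀) = 1; ring
  · have ht0' : 0 < t₀ := lt_of_le_of_ne ht₀I.1 (Ne.symm ht0)
    by_cases hs1 : (s₀:ℝ) = 1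
    · -- y is on the first arc: subarc of J₁ from x to y
      have hFy : F t₀ = y := by
        rw [← hs₀, ← hg1]; congr 1; exact Subtype.ext hs1
      set h : unitInterval → X := fun t =>
        F ((t:ℝ) * t₀) with hhdef
      have hmem : ∀ t : unitInterval, (t:ℝ) * t₀ ∈ Icc (0:ℝ) 1 := by
        intro t
        constructor
        · nlinarith [t.2.1, t.2.2, ht₀I.1, ht₀I.2]
        · nlinarith [t.2.1, t.2.2, ht₀I.1, ht₀I.2]
      refine ⟨range h, ?_, h, ?_, ?_, rfl, ?_, ?_⟩
      · rintro _ ⟨t, rfl⟩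
        left
        show F _ ∈ J₁
        rw [hFval _ (hmem t)]
        exact hfr ▸ mem_range_self _
      · fun_prop
      · intro a b hab
        have h2 : (a:ℝ) * t₀ = (b:ℝ) * t₀ := hFinj _ (hmem a) _ (hmem b) hab
        exact Subtype.ext (mul_right_cancel₀ (ne_of_gt ht0') h2)
      · show F ((0:ℝ) * t₀) = x
        rw [zero_mul, hF0]
      · show F ((1:ℝ) * t₀) = y
        rw [one_mul, hFy]
    · -- generic case: concatenate
      have hs1' : (s₀:ℝ) < 1 := lt_of_le_of_ne hs₀I.2 hs1
      have hmem₁ : ∀ t : unitInterval, (t:ℝ) * t₀ ∈ Icc (0:ℝ) 1 := by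
        intro t
        constructor
        · nlinarith [t.2.1, t.2.2, ht₀I.1, ht₀I.2]
        · nlinarith [t.2.1, t.2.2, ht₀I.1, ht₀I.2]
      have hmem₂ : ∀ t : unitInterval, (s₀:ℝ) + (t:ℝ) * (1 - s₀) ∈ Icc (0:ℝ) 1 := by
        intro t
        constructor
        · nlinarith [t.2.1, t.2.2, s₀.2.1, s₀.2.2]
        · nlinarith [t.2.1, t.2.2, s₀.2.1, s₀.2.2]
      set γ₁ : Path x (F t₀) :=
        { toFun := fun t => F ((t:ℝ) * t₀)
          continuous_toFun := by fun_prop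
          source' := by show F ((0:ℝ) * t₀) = x; rw [zero_mul, hF0]
          target' := by show F ((1:ℝ) * t₀) = F t₀; rw [one_mul] } with hγ₁def
      set γ₂ : Path (F t₀) y :=
        { toFun := fun t => G ((s₀:ℝ) + (t:ℝ) * (1 - s₀))
          continuous_toFun := by fun_prop
          source' := by
            show G ((s₀:ℝ) + (0:ℝ) * (1 - s₀)) = F t₀
            rw [← hs₀]
            rw [hGval _ (by constructor <;> nlinarith [s₀.2.1, s₀.2.2] : (s₀:ℝ) + (0:ℝ) * (1 - s₀) ∈ Icc (0:ℝ) 1)]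
            congr 1; apply Subtype.ext; show (s₀:ℝ) + 0 * _ = s₀; ring
          target' := by
            show G ((s₀:ℝ) + (1:ℝ) * (1 - s₀)) = y
            have : (s₀:ℝ) + (1:ℝ) * (1 - s₀) = 1 := by ring
            rw [this, hG1] } with hγ₂def
      set γ : Path x y := γ₁.trans γ₂ with hγdef
      -- key: the first half cannot meet the second half except at the junction
      have key : ∀ a b : unitInterval, (a:ℝ) ≤ 1/2 → ¬ ((b:ℝ) ≤ 1/2) →
          F ((2 * (a:ℝ)) * t₀) = G ((s₀:ℝ) + (2 * (b:ℝ) - 1) * (1 - s₀)) → False := by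
        intro a b ha hb hab
        push_neg at hb
        set q : ℝ := (s₀:ℝ) + (2 * (b:ℝ) - 1) * (1 - s₀) with hq
        have hqI : q ∈ Icc (0:ℝ) 1 := by
          constructor
          · nlinarith [b.2.1, b.2.2, s₀.2.1, s₀.2.2]
          · nlinarith [b.2.1, b.2.2, s₀.2.1, s₀.2.2]
        have haI : (2 * (a:ℝ)) * t₀ ∈ Icc (0:ℝ) 1 := by
          constructor
          · nlinarith [a.2.1, ht₀I.1]
          · nlinarith [a.2.1, ht₀I.1, ht₀I.2]
        have hrg : F ((2 * (a:ℝ)) * t₀) ∈ range g := by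
          rw [hab, hGval _ hqI]; exact mem_range_self _
        have hle : t₀ ≤ (2 * (a:ℝ)) * t₀ := hmin _ ⟨haI, hrg⟩
        have hge : (2 * (a:ℝ)) * t₀ ≤ t₀ := by nlinarith [a.2.1]
        have heq : (2 * (a:ℝ)) * t₀ = t₀ := le_antisymm hge hle
        rw [heq, ← hs₀, hGval _ hqI] at hab
        have : (s₀:ℝ) = q := congrArg Subtype.val (hgi hab)
        have : (2 * (b:ℝ) - 1) * (1 - (s₀:ℝ)) = 0 := by rw [hq] at this; linarith
        rcases mul_eq_zero.1 this with h | h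
        · linarith
        · linarith
      have hinj : Function.Injective γ := by
        intro a b hab
        rw [hγdef, Path.trans_apply, Path.trans_apply] at hab
        split_ifs at hab with ha hb hb
        · have hab' : F ((2 * (a:ℝ)) * t₀) = F ((2 * (b:ℝ)) * t₀) := hab
          have haI : (2 * (a:ℝ)) * t₀ ∈ Icc (0:ℝ) 1 := by
            constructor
            · nlinarith [a.2.1, ht₀I.1]
            · nlinarith [a.2.1, ht₀I.1, ht₀I.2]
          have hbI : (2 * (b:ℝ)) * t₀ ∈ Icc (0:ℝ) 1 := by
            constructor
            · nlinarith [b.2.1, ht₀I.1]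
            · nlinarith [b.2.1, ht₀I.1, ht₀I.2]
          have := hFinj _ haI _ hbI hab'
          have : (2:ℝ) * a = 2 * b := mul_right_cancel₀ (ne_of_gt ht0') this
          exact Subtype.ext (by linarith)
        · exact absurd (key a b ha hb hab) id
        · exact absurd (key b a hb ha hab.symm) id
        · have hab' : G ((s₀:ℝ) + (2 * (a:ℝ) - 1) * (1 - s₀)) =
              G ((s₀:ℝ) + (2 * (b:ℝ) - 1) * (1 - s₀)) := hab
          push_neg at ha hb
          have hqa : (s₀:ℝ) + (2 * (a:ℝ) - 1) * (1 - s₀) ∈ Icc (0:ℝ) 1 := by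
            constructor
            · nlinarith [a.2.1, a.2.2, s₀.2.1, s₀.2.2]
            · nlinarith [a.2.1, a.2.2, s₀.2.1, s₀.2.2]
          have hqb : (s₀:ℝ) + (2 * (b:ℝ) - 1) * (1 - s₀) ∈ Icc (0:ℝ) 1 := by
            constructor
            · nlinarith [b.2.1, b.2.2, s₀.2.1, s₀.2.2]
            · nlinarith [b.2.1, b.2.2, s₀.2.1, s₀.2.2]
          have := hGinj _ hqa _ hqb hab'
          have h2 : (2 * (a:ℝ) - 1) * (1 - (s₀:ℝ)) = (2 * (b:ℝ) - 1) * (1 - (s₀:ℝ)) := by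
            linarith
          have := mul_right_cancel₀ (by linarith : (1:ℝ) - (s₀:ℝ) ≠ 0) h2
          exact Subtype.ext (by linarith)
      refine ⟨range γ, ?_, γ, γ.continuous, hinj, rfl, γ.source, γ.target⟩
      rw [hγdef, Path.trans_range]
      apply union_subset
      · rintro _ ⟨t, rfl⟩
        left
        show F ((t:ℝ) * t₀) ∈ J₁
        rw [hFval _ (hmem₁ t)]
        exact hfr ▸ mem_range_self _
      · rintro _ ⟨t, rfl⟩
        right
        show G ((s₀:ℝ) + (t:ℝ) * (1 - s₀)) ∈ J₂
        rw [hGval _ (hmem₂ t)]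
        exact hgr ▸ mem_range_self _

lemma arcDelta_le_diam {X : Type*} [MetricSpace X] {x y : X} {H : Set X}
    (hH : ArcConnected H) (hx : x ∈ H) (hy : y ∈ H) :
    arcDelta x y ≤ EMetric.diam H :=
  sInf_le ⟨H, ⟨hH, hx, hy⟩, rfl⟩

/-- Every open `δ`-ball of finite positive radius is arc-connected. -/
theorem stmt8 {X : Type*} [MetricSpace X] (x₀ : X) (r : ℝ≥0∞) (hr : 0 < r) (hr' : r ≠ ⊤) :
    ArcConnected {y : X | arcDelta x₀ y < r} := by
  intro x hx y hy hxy
  simp only [mem_setOf_eq] at hx hy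
  obtain ⟨_, ⟨H₁, ⟨hH₁, hx₀₁, hx₁⟩, rfl⟩, hd₁⟩ := sInf_lt_iff.mp hx
  obtain ⟨_, ⟨H₂, ⟨hH₂, hx₀₂, hy₂⟩, rfl⟩, hd₂⟩ := sInf_lt_iff.mp hy
  have hsub₁ : H₁ ⊆ {y : X | arcDelta x₀ y < r} := fun w hw =>
    lt_of_le_of_lt (arcDelta_le_diam hH₁ hx₀₁ hw) hd₁
  have hsub₂ : H₂ ⊆ {y : X | arcDelta x₀ y < r} := fun w hw =>
    lt_of_le_of_lt (arcDelta_le_diam hH₂ hx₀₂ hw) hd₂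
  by_cases hx0 : x = x₀
  · subst hx0
    obtain ⟨J, hJsub, hJ⟩ := hH₂ x hx₀₂ y hy₂ hxy
    exact ⟨J, hJsub.trans hsub₂, hJ⟩
  · by_cases hy0 : y = x₀
    · subst hy0
      obtain ⟨J, hJsub, hJ⟩ := hH₁ x hx₁ y hx₀₁ hxy
      exact ⟨J, hJsub.trans hsub₁, hJ⟩
    · obtain ⟨J₁, hJ₁sub, hJ₁⟩ := hH₁ x hx₁ x₀ hx₀₁ hx0
      obtain ⟨J₂, hJ₂sub, hJ₂⟩ := hH₂ x₀ hx₀₂ y hy₂ (fun h => hy0 h.symm)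
      obtain ⟨J, hJsub, hJ⟩ := arcConcat hJ₁ hJ₂ hxy
      refine ⟨J, ?_, hJ⟩
      exact hJsub.trans (union_subset (hJ₁sub.trans hsub₁) (hJ₂sub.trans hsub₂))
end

section
/- Let X and Y be Polish spaces and let Z ⊆ X × Y be an analytic set, with projection π(Z) = { x ∈ X : ∃ y, (x,y) ∈ Z }. Then there exists a function f : X → Option Y which is measurable from the σ-algebra on X generated by the analytic subsets of X to the Borel σ-algebra of Option Y (Y with a point * adjoined), such that for every x ∈ X: f(x) = * if and only if x ∉ π(Z), and if x ∈ π(Z) then f(x) = y for some y ∈ Y with (x,y) ∈ Z. -/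
open Set TopologicalSpace MeasureTheory

namespace YvNAux

/-- The cylinder of a finite sequence in Baire space. -/
def cyl (l : List ℕ) : Set (ℕ → ℕ) := {ω | ∀ i < l.length, l[i]? = some (ω i)}

lemma isClosed_cyl (l : List ℕ) : IsClosed (cyl l) := by
  have : cyl l = ⋂ i ∈ {i | i < l.length}, {ω : ℕ → ℕ | l[i]? = some (ω i)} := by
    ext ω; simp [cyl]
  rw [this]
  refine isClosed_biInter fun i _ => ?_
  exact IsClosed.preimage (continuous_apply (A := fun _ : ℕ => ℕ) i)
    (isClosed_discrete {n : ℕ | l[i]? = some n})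

set_option linter.unusedSectionVars false

variable {X Y : Type*} [TopologicalSpace X] [PolishSpace X] [TopologicalSpace Y]

/-- The analytic "trace" sets: projections of images of cylinders. -/
def A (F : (ℕ → ℕ) → X × Y) (l : List ℕ) : Set X := (fun ω => (F ω).1) '' cyl l

/-- The next value of the leftmost branch after the finite sequence `l`. -/
noncomputable def nxt (F : (ℕ → ℕ) → X × Y) (x : X) (l : List ℕ) : ℕ :=
  sInf {m | x ∈ A F (l ++ [m])}

/-- Finite initial segments of the leftmost branch through the fiber over `x`. -/
noncomputable def seg (F : (ℕ → ℕ) → X × Y) (x : X) : ℕ → List ℕ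
  | 0 => []
  | n + 1 => seg F x n ++ [nxt F x (seg F x n)]

/-- The leftmost branch. -/
noncomputable def lmb (F : (ℕ → ℕ) → X × Y) (x : X) : ℕ → ℕ :=
  fun n => nxt F x (seg F x n)

lemma seg_length (F : (ℕ → ℕ) → X × Y) (x : X) : ∀ n, (seg F x n).length = n
  | 0 => rfl
  | n + 1 => by simp [seg, seg_length F x n]

lemma mem_A_append (F : (ℕ → ℕ) → X × Y) {x : X} {l : List ℕ}
    (h : x ∈ A F l) : ∃ m, x ∈ A F (l ++ [m]) := by
  obtain ⟨ω, hω, hωx⟩ := h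
  refine ⟨ω l.length, ω, fun i hi => ?_, hωx⟩
  rcases Nat.lt_succ_iff_lt_or_eq.1 (by simpa using hi) with hi' | hi'
  · rw [List.getElem?_append_left hi']; exact hω i hi'
  · subst hi'; exact List.getElem?_concat_length

lemma mem_A_seg (F : (ℕ → ℕ) → X × Y) {x : X} (h : x ∈ A F []) :
    ∀ n, x ∈ A F (seg F x n)
  | 0 => h
  | n + 1 => by
    have hn := mem_A_seg F h n
    have hne : {m | x ∈ A F (seg F x n ++ [m])}.Nonempty := mem_A_append F hn
    exact Nat.sInf_mem hne

lemma seg_getElem? (F : (ℕ → ℕ) → X × Y) (x : X) :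
    ∀ n, ∀ i < n, (seg F x n)[i]? = some (lmb F x i) := by
  intro n
  induction n with
  | zero => intro i hi; omega
  | succ n ih =>
    intro i hi
    rcases Nat.lt_succ_iff_lt_or_eq.1 hi with hi' | hi'
    · show (seg F x n ++ _)[i]? = _
      rw [List.getElem?_append_left (by rw [seg_length]; exact hi')]
      exact ih i hi'
    · subst hi'
      show (seg F x i ++ [nxt F x (seg F x i)])[i]? = _
      have : (seg F x i ++ [nxt F x (seg F x i)])[(seg F x i).length]? = some (nxt F x (seg F x i)) :=
        List.getElem?_concat_length
      rw [seg_length] at this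
      exact this

lemma lmb_mem_cyl (F : (ℕ → ℕ) → X × Y) (x : X) (n : ℕ) :
    lmb F x ∈ cyl (seg F x n) := by
  intro i hi
  rw [seg_length] at hi
  exact seg_getElem? F x n i hi

/-- Key fact: for `x` in the projection, the leftmost branch lands in the fiber over `x`. -/
lemma fst_F_lmb [T2Space X] (F : (ℕ → ℕ) → X × Y) (hF : Continuous F) {x : X}
    (h : x ∈ A F []) : (F (lmb F x)).1 = x := by
  have hC : IsClosed ((fun ω => (F ω).1) ⁻¹' {x}) :=
    (isClosed_singleton).preimage (continuous_fst.comp hF)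
  have hmem : ∀ n, ∃ ω, ω ∈ cyl (seg F x n) ∧ (F ω).1 = x := by
    intro n; exact (mem_A_seg F h n)
  choose u hu hux using hmem
  have hconv : Filter.Tendsto u Filter.atTop (nhds (lmb F x)) := by
    rw [tendsto_pi_nhds]
    intro i
    have : ∀ n > i, u n i = lmb F x i := by
      intro n hn
      have h1 := hu n i (by rw [seg_length]; exact hn)
      have h2 := seg_getElem? F x n i hn
      rw [h1] at h2
      exact Option.some_injective _ h2
    refine Filter.Tendsto.congr' ?_ tendsto_const_nhds
    filter_upwards [Filter.eventually_gt_atTop i] with n hn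
    exact (this n hn).symm
  have : lmb F x ∈ (fun ω => (F ω).1) ⁻¹' {x} :=
    hC.mem_of_tendsto hconv (Filter.Eventually.of_forall fun n => hux n)
  exact this

section Measurability

variable (F : (ℕ → ℕ) → X × Y)


lemma analyticSet_A (hF : Continuous F) (l : List ℕ) : AnalyticSet (A F l) :=
  ((isClosed_cyl l).analyticSet).image_of_continuous (continuous_fst.comp hF)

lemma measurableSet_A (hF : Continuous F) (l : List ℕ) : MeasurableSet[MeasurableSpace.generateFrom {s : Set X | AnalyticSet s}] (A F l) :=
  MeasurableSpace.measurableSet_generateFrom (analyticSet_A F hF l)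

lemma measurableSet_nxt (hF : Continuous F) (l : List ℕ) (m : ℕ) :
    MeasurableSet[MeasurableSpace.generateFrom {s : Set X | AnalyticSet s}] {x | nxt F x l = m} := by
  letI : MeasurableSpace X := MeasurableSpace.generateFrom {s : Set X | AnalyticSet s}
  have key : {x | nxt F x l = m} =
      (A F (l ++ [m]) ∩ ⋂ k ∈ {k | k < m}, (A F (l ++ [k]))ᶜ) ∪
      (⋂ k : ℕ, (A F (l ++ [k]))ᶜ) ∩ {x : X | m = 0} := by
    ext x
    simp only [mem_union, mem_inter_iff, mem_iInter, mem_compl_iff, mem_setOf_eq, nxt]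
    constructor
    · intro hx
      by_cases hne : {m' | x ∈ A F (l ++ [m'])}.Nonempty
      · left
        have h1 := Nat.sInf_mem hne
        rw [hx] at h1
        refine ⟨h1, fun k hk => ?_⟩
        exact Nat.notMem_of_lt_sInf (hx ▸ hk)
      · right
        push_neg at hne
        rw [Set.eq_empty_iff_forall_notMem] at hne
        refine ⟨fun k => hne k, ?_⟩
        rw [← hx]
        exact Nat.sInf_eq_zero.2 (Or.inr (Set.eq_empty_iff_forall_notMem.2 hne))
    · rintro (⟨h1, h2⟩ | ⟨h1, h2⟩)
      · refine le_antisymm (Nat.sInf_le h1) ?_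
        by_contra hlt
        push_neg at hlt
        have hmem := Nat.sInf_mem (⟨m, h1⟩ : Set.Nonempty {m' | x ∈ A F (l ++ [m'])})
        exact h2 _ hlt hmem
      · subst h2
        exact Nat.sInf_eq_zero.2 (Or.inr (Set.eq_empty_iff_forall_notMem.2 h1))
  rw [key]
  refine MeasurableSet.union
    ((measurableSet_A F hF _).inter
      (MeasurableSet.biInter (to_countable _) fun k _ => (measurableSet_A F hF _).compl))
    (MeasurableSet.inter (MeasurableSet.iInter fun k => (measurableSet_A F hF _).compl) ?_)
  by_cases hm : m = 0
  · simp only [hm, setOf_true]; exact MeasurableSet.univ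
  · have : {x : X | m = 0} = ∅ := by simp [hm]
    rw [this]; exact MeasurableSet.empty

lemma measurableSet_seg (hF : Continuous F) :
    ∀ n, ∀ l : List ℕ, MeasurableSet[MeasurableSpace.generateFrom {s : Set X | AnalyticSet s}] {x | seg F x n = l} := by
  letI : MeasurableSpace X := MeasurableSpace.generateFrom {s : Set X | AnalyticSet s}
  intro n
  induction n with
  | zero =>
    intro l
    by_cases h : l = []
    · subst h
      have : {x : X | seg F x 0 = []} = univ := by ext x; simp [seg]
      rw [this]; exact MeasurableSet.univ
    · have : {x : X | seg F x 0 = l} = ∅ := by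
        ext x; simp only [mem_setOf_eq, mem_empty_iff_false, iff_false]
        intro hx; exact h (hx ▸ rfl)
      rw [this]; exact MeasurableSet.empty
  | succ n ih =>
    intro l
    have key : {x | seg F x (n + 1) = l} =
        ⋃ l' : List ℕ, ⋃ m : ℕ, ⋃ _ : l' ++ [m] = l,
          ({x | seg F x n = l'} ∩ {x | nxt F x l' = m}) := by
      ext x
      simp only [mem_iUnion, mem_inter_iff, mem_setOf_eq]
      constructor
      · intro hx
        exact ⟨seg F x n, nxt F x (seg F x n), hx, rfl, rfl⟩
      · rintro ⟨l', m, hlm, h1, h2⟩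
        show seg F x n ++ [nxt F x (seg F x n)] = l
        rw [h1, h2, hlm]
    rw [key]
    exact MeasurableSet.iUnion fun l' => MeasurableSet.iUnion fun m =>
      MeasurableSet.iUnion fun _ => (ih l').inter (measurableSet_nxt F hF l' m)

lemma measurable_lmb (hF : Continuous F) :
    Measurable[MeasurableSpace.generateFrom {s : Set X | AnalyticSet s}] (fun x => lmb F x) := by
  letI : MeasurableSpace X := MeasurableSpace.generateFrom {s : Set X | AnalyticSet s}
  refine measurable_pi_lambda _ fun n => ?_
  refine measurable_to_countable' fun m => ?_
  have key : (fun x => lmb F x n) ⁻¹' {m} =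
      ⋃ l : List ℕ, {x | seg F x n = l} ∩ {x | nxt F x l = m} := by
    ext x
    simp only [mem_preimage, mem_singleton_iff, mem_iUnion, mem_inter_iff, mem_setOf_eq, lmb]
    constructor
    · intro hx; exact ⟨seg F x n, rfl, hx⟩
    · rintro ⟨l, h1, h2⟩; rw [h1]; exact h2
  rw [key]
  exact MeasurableSet.iUnion fun l =>
    (measurableSet_seg F hF n l).inter (measurableSet_nxt F hF l m)

end Measurability

end YvNAux

/-- The Borel σ-algebra on `Option Y` (`Y` with an extra point `*` adjoined): generated by
`{*}` together with the images in `Option Y` of the Borel subsets of `Y`. -/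
def optionMS (Y : Type*) [MeasurableSpace Y] : MeasurableSpace (Option Y) :=
  MeasurableSpace.generateFrom
    ({({none} : Set (Option Y))} ∪ {s | ∃ t : Set Y, MeasurableSet t ∧ s = Option.some '' t})

/-- A Σ-measurable uniformization of an analytic set, extended by `*` off the projection
(Yankov–von Neumann selection together with Lemma on `Option`-valued extensions). -/
theorem stmt12 {X Y : Type*} [TopologicalSpace X] [PolishSpace X]
    [TopologicalSpace Y] [PolishSpace Y] [MeasurableSpace Y] [BorelSpace Y]
    (Z : Set (X × Y)) (hZ : AnalyticSet Z) :
    ∃ f : X → Option Y,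
      @Measurable X (Option Y)
        (MeasurableSpace.generateFrom {s : Set X | AnalyticSet s}) (optionMS Y) f ∧
      ∀ x : X, (f x = none ↔ ¬ ∃ y : Y, (x, y) ∈ Z) ∧
        (∀ y : Y, f x = some y → (x, y) ∈ Z) := by
  classical
  rw [MeasureTheory.AnalyticSet] at hZ
  rcases hZ with hZ | ⟨F, hF, hFZ⟩
  · -- empty case
    refine ⟨fun _ => none, ?_, ?_⟩
    · exact @measurable_const (Option Y) X (optionMS Y)
        (MeasurableSpace.generateFrom {s : Set X | AnalyticSet s}) none
    · intro x
      subst hZ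
      exact ⟨by simp, fun y hy => by simp at hy ⊢⟩
  · -- nonempty case: Z = range F
    have hA0 : YvNAux.A F [] = {x : X | ∃ y : Y, (x, y) ∈ Z} := by
      ext x
      constructor
      · rintro ⟨ω, -, rfl⟩
        exact ⟨(F ω).2, by rw [← hFZ]; exact ⟨ω, rfl⟩⟩
      · rintro ⟨y, hy⟩
        rw [← hFZ] at hy
        obtain ⟨ω, hω⟩ := hy
        exact ⟨ω, fun i hi => by simp [YvNAux.cyl] at hi, by show (F ω).1 = x; rw [hω]⟩
    set g : X → Y := fun x => (F (YvNAux.lmb F x)).2 with hg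
    refine ⟨fun x => if x ∈ YvNAux.A F [] then some (g x) else none, ?_, ?_⟩
    · -- measurability
      letI m0 : MeasurableSpace X := MeasurableSpace.generateFrom {s : Set X | AnalyticSet s}
      refine measurable_generateFrom ?_
      rintro t (ht | ⟨u, hu, rfl⟩)
      · -- t = {none}
        simp only [Set.mem_singleton_iff] at ht
        subst ht
        have : (fun x => if x ∈ YvNAux.A F [] then some (g x) else none) ⁻¹' {none}
            = (YvNAux.A F [])ᶜ := by
          ext x
          by_cases hx : x ∈ YvNAux.A F [] <;> simp [hx]
        rw [this]
        exact (YvNAux.measurableSet_A F hF []).compl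
      · -- t = some '' u
        have hgm : Measurable[m0] g := by
          have h1 : Measurable fun ω : ℕ → ℕ => (F ω).2 :=
            (continuous_snd.comp hF).measurable
          exact h1.comp (YvNAux.measurable_lmb F hF)
        have : (fun x => if x ∈ YvNAux.A F [] then some (g x) else none) ⁻¹' (Option.some '' u)
            = YvNAux.A F [] ∩ g ⁻¹' u := by
          ext x
          by_cases hx : x ∈ YvNAux.A F [] <;>
            simp [hx, Option.some_injective, Set.mem_image]
        rw [this]
        exact (YvNAux.measurableSet_A F hF []).inter (hgm hu)
    · -- pointwise properties
      intro x
      have hA0' : x ∈ YvNAux.A F [] ↔ ∃ y : Y, (x, y) ∈ Z := by rw [hA0]; rfl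
      by_cases hx : x ∈ YvNAux.A F []
      · refine ⟨?_, ?_⟩
        · simp only [hx, if_true]
          constructor
          · intro h; exact absurd h (by simp)
          · intro h; exact absurd (hA0'.1 hx) h
        · intro y hy
          simp only [hx, if_true, Option.some.injEq] at hy
          have hfst : (F (YvNAux.lmb F x)).1 = x := YvNAux.fst_F_lmb F hF hx
          have hmem : F (YvNAux.lmb F x) ∈ Z := by rw [← hFZ]; exact ⟨_, rfl⟩
          have heq : (x, y) = F (YvNAux.lmb F x) := Prod.ext hfst.symm hy.symm
          rw [heq]; exact hmem
      · refine ⟨?_, ?_⟩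
        · constructor
          · intro _
            exact fun hcon => hx (hA0'.2 hcon)
          · intro _
            simp [hx]
        · intro y hy
          simp [hx] at hy
end
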